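/- arXiv:2407.19309 — 16 statements merged into one kernel-verified Lean document; each statement's English description precedes it below -/
import Mathlib

section
/- Let G be a nontrivial group acting on a set X, and let H be a subgroup of G. For x ∈ X let H_x = {h ∈ H : h·x = x} be the stabilizer of x in H. If for all x, y ∈ X with x ≠ y the stabilizer H_x is not contained in H_y, then the subgroup generated by the normal closure of H in G together with the kernel of the action (i.e., ncl_G(H)·Ker(f), the join of the normal closure of H and the kernel of the permutation representation G → Sym(X)) is an essential subgroup of G. -/
/-- A subgroup `E` of `G` is *essential* if it is normal and meets every
nontrivial normal subgroup of `G` nontrivially. -/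
def IsEssential {G : Type*} [Group G] (E : Subgroup G) : Prop :=
  E.Normal ∧ ∀ N : Subgroup G, N.Normal → N ≠ ⊥ → E ⊓ N ≠ ⊥

/-- If `G` is a nontrivial group acting on `X`, `H ≤ G`, and for all `x ≠ y` the
stabilizer of `x` in `H` is not contained in the stabilizer of `y` in `H`, then
`ncl_G(H) · Ker(f)` is an essential subgroup of `G`. -/
theorem stmt0 {G X : Type*} [Group G] [Nontrivial G] [MulAction G X]
    (H : Subgroup G)
    (hstab : ∀ x y : X, x ≠ y →
      ¬ (H ⊓ MulAction.stabilizer G x ≤ H ⊓ MulAction.stabilizer G y)) :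
    IsEssential (Subgroup.normalClosure (H : Set G) ⊔ (MulAction.toPermHom G X).ker) := by
  set E := Subgroup.normalClosure (H : Set G) ⊔ (MulAction.toPermHom G X).ker with hE
  have hEnormal : E.Normal := Subgroup.sup_normal _ _
  refine ⟨hEnormal, fun N hN hNbot hcontra => ?_⟩
  -- pick nontrivial n ∈ N
  obtain ⟨⟨n, hnN⟩, hn1'⟩ := Subgroup.ne_bot_iff_exists_ne_one.mp hNbot
  have hn1 : n ≠ 1 := by simpa [Subgroup.mk_eq_one] using hn1'
  -- n is not in the kernel, else n ∈ E ⊓ N = ⊥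
  have hker : n ∉ (MulAction.toPermHom G X).ker := by
    intro hk
    have : n ∈ E ⊓ N := ⟨(le_sup_right : _ ≤ E) hk, hnN⟩
    rw [hcontra] at this
    exact hn1 (by simpa using this)
  -- so n moves some x
  have : ∃ x : X, n • x ≠ x := by
    by_contra hall
    push_neg at hall
    apply hker
    rw [MonoidHom.mem_ker]
    ext x
    simpa using hall x
  obtain ⟨x, hx⟩ := this
  set y := n • x with hy
  have hxy : x ≠ y := fun h => hx h.symm
  obtain ⟨h, hhx, hhy⟩ := Set.not_subset.mp (hstab x y hxy)
  have hhH : h ∈ H := hhx.1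
  have hhsx : h • x = x := hhx.2
  have hhsy : h • y ≠ y := fun hs => hhy ⟨hhH, hs⟩
  -- the commutator c = n h n⁻¹ h⁻¹ lies in E ⊓ N = ⊥
  set c := n * h * n⁻¹ * h⁻¹ with hc
  have hcE : c ∈ E := by
    have h1 : n * h * n⁻¹ ∈ Subgroup.normalClosure (H : Set G) :=
      Subgroup.normalClosure_normal.conj_mem _ (Subgroup.subset_normalClosure hhH) n
    have h2 : h⁻¹ ∈ Subgroup.normalClosure (H : Set G) :=
      inv_mem (Subgroup.subset_normalClosure hhH)
    exact (le_sup_left : _ ≤ E) (mul_mem h1 h2)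
  have hcN : c ∈ N := by
    have h1 : h * n⁻¹ * h⁻¹ ∈ N := by
      have := hN.conj_mem n⁻¹ (inv_mem hnN) h
      simpa [mul_assoc] using this
    have : n * (h * n⁻¹ * h⁻¹) ∈ N := mul_mem hnN h1
    simpa [hc, mul_assoc] using this
  have hc1 : c = 1 := by
    have : c ∈ E ⊓ N := ⟨hcE, hcN⟩
    rw [hcontra] at this
    exact this
  -- so n and h commute, contradiction
  have hcomm : n * h = h * n := by
    have h1 : n * h * n⁻¹ = h := by
      have := hc1
      rw [hc, mul_inv_eq_one] at this
      exact this
    exact mul_inv_eq_iff_eq_mul.mp h1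
  have : h • y = y := by
    calc h • y = h • (n • x) := by rw [hy]
    _ = (h * n) • x := (mul_smul h n x).symm
    _ = (n * h) • x := by rw [hcomm]
    _ = n • (h • x) := mul_smul n h x
    _ = n • x := by rw [hhsx]
    _ = y := hy.symm
  exact hhsy this
end

section
/- Let G be a group and S a nontrivial malnormal subgroup of G. Then either the normal closure ncl_G(S) equals G, or ncl_G(S) is a proper essential subgroup of G. -/
/-- A subgroup `S` of `G` is *malnormal* if `gSg⁻¹ ∩ S = {1}` for every `g ∉ S`. -/
def IsMalnormal {G : Type*} [Group G] (S : Subgroup G) : Prop :=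
  ∀ g : G, g ∉ S → ∀ h : G, h ∈ S → g * h * g⁻¹ ∈ S → h = 1

/-- If `S` is a nontrivial malnormal subgroup of a group `G`, then either the normal
closure of `S` is all of `G`, or it is a proper essential subgroup of `G`. -/
theorem stmt3 {G : Type*} [Group G] (S : Subgroup G) (hSbot : S ≠ ⊥)
    (hS : IsMalnormal S) :
    Subgroup.normalClosure (S : Set G) = ⊤ ∨
      (IsEssential (Subgroup.normalClosure (S : Set G)) ∧
        Subgroup.normalClosure (S : Set G) ≠ ⊤) := by
  set C := Subgroup.normalClosure (S : Set G) with hC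
  by_cases htop : C = ⊤
  · exact Or.inl htop
  · refine Or.inr ⟨⟨Subgroup.normalClosure_normal, ?_⟩, htop⟩
    intro N hN hNbot hinf
    -- N and C are disjoint normal subgroups, hence commute elementwise
    have hdisj : Disjoint C N := disjoint_iff.mpr hinf
    have hcomm := Subgroup.commute_of_normal_of_disjoint C N
      Subgroup.normalClosure_normal hN hdisj
    obtain ⟨⟨n, hnN⟩, hn1'⟩ := Subgroup.ne_bot_iff_exists_ne_one.mp hNbot
    obtain ⟨⟨s, hsS⟩, hs1'⟩ := Subgroup.ne_bot_iff_exists_ne_one.mp hSbot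
    have hn1 : n ≠ 1 := fun h => hn1' (by simpa using h)
    have hs1 : s ≠ 1 := fun h => hs1' (by simpa using h)
    have hsC : s ∈ C := Subgroup.subset_normalClosure hsS
    have hcs : n * s * n⁻¹ = s := by
      have := (hcomm s n hsC hnN).symm.eq
      group at this ⊢
      rw [this]; group
    have hnS : n ∈ S := by
      by_contra hnS
      exact hs1 (hS n hnS s hsS (by rw [hcs]; exact hsS))
    have hnC : n ∈ C := Subgroup.subset_normalClosure hnS
    have : n ∈ C ⊓ N := ⟨hnC, hnN⟩
    rw [hinf] at this
    exact hn1 this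
end

section
/- Let Λ be an index set with at least 2 elements, let (K_λ)_{λ∈Λ} be a family of nontrivial groups, and let G be the free product of the K_λ. Then for every λ ∈ Λ, the normal closure in G of the canonical image of K_λ is a proper essential subgroup of G. -/
namespace CoprodAux

open Monoid Monoid.CoprodI

variable {ι : Type*} {K : ι → Type*} [∀ i, Group (K i)]

/-- The product of a list of letters. -/
def plist (l : List (Σ i, K i)) : Monoid.CoprodI K :=
  (l.map fun p => Monoid.CoprodI.of p.2).prod

@[simp] lemma plist_nil : plist ([] : List (Σ i, K i)) = 1 := rfl

@[simp] lemma plist_cons (p : Σ i, K i) (l : List (Σ i, K i)) :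
    plist (p :: l) = Monoid.CoprodI.of p.2 * plist l := by simp [plist]

lemma plist_concat (l : List (Σ i, K i)) (p : Σ i, K i) :
    plist (l ++ [p]) = plist l * Monoid.CoprodI.of p.2 := by simp [plist]

lemma plist_cons_append (p r : Σ i, K i) (l : List (Σ i, K i)) :
    plist (p :: (l ++ [r])) = plist (p :: l) * Monoid.CoprodI.of r.2 := by
  rw [show p :: (l ++ [r]) = (p :: l) ++ [r] from rfl, plist_concat]

/-- A reduced list of letters. -/
def Reduced (l : List (Σ i, K i)) : Prop :=
  (∀ p ∈ l, p.2 ≠ 1) ∧ l.Chain' fun p q => p.1 ≠ q.1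

lemma reduced_inj {l1 l2 : List (Σ i, K i)} (h1 : Reduced l1) (h2 : Reduced l2)
    (h : plist l1 = plist l2) : l1 = l2 := by
  classical
  have key : (⟨l1, h1.1, h1.2⟩ : Word K) = ⟨l2, h2.1, h2.2⟩ :=
    (Word.equiv (M := K)).symm.injective h
  exact congrArg Word.toList key

lemma commute_of {i : ι} {a : K i} (ha : a ≠ 1) {l : List (Σ i, K i)} (hl : Reduced l)
    (h : Monoid.CoprodI.of a * plist l = plist l * Monoid.CoprodI.of a) :
    ∃ x : K i, plist l = Monoid.CoprodI.of x := by
  classical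
  rcases l with _ | ⟨⟨p, x⟩, t⟩
  · exact ⟨1, by simp⟩
  rcases t.eq_nil_or_concat' with rfl | ⟨t', ⟨q, y⟩, rfl⟩
  · -- singleton case
    by_cases hpi : p = i
    · subst hpi; exact ⟨x, by simp⟩
    · exfalso
      have hx : x ≠ 1 := hl.1 ⟨p, x⟩ (by simp)
      have heq : ([⟨i, a⟩, ⟨p, x⟩] : List (Σ i, K i)) = [⟨p, x⟩, ⟨i, a⟩] := by
        apply reduced_inj
        · refine ⟨?_, List.isChain_pair.mpr (Ne.symm hpi)⟩
          rintro r hr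
          simp only [List.mem_cons, List.not_mem_nil, or_false] at hr
          rcases hr with rfl | rfl <;> assumption
        · refine ⟨?_, List.isChain_pair.mpr hpi⟩
          rintro r hr
          simp only [List.mem_cons, List.not_mem_nil, or_false] at hr
          rcases hr with rfl | rfl <;> assumption
        · simp only [plist_cons, plist_nil, mul_one] at h ⊢
          exact h
      simp [Sigma.ext_iff] at heq
      exact hpi heq.1.1.symm
  · -- main case : l = ⟨p,x⟩ :: (t' ++ [⟨q,y⟩])
    exfalso
    obtain ⟨hne, hch⟩ := hl
    have hx : x ≠ 1 := hne ⟨p, x⟩ (by simp)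
    have hy : y ≠ 1 := hne ⟨q, y⟩ (by simp)
    have hch1 := (List.isChain_cons.mp hch)
    have hhead : ∀ v ∈ (t' ++ [⟨q, y⟩] : List (Σ i, K i)).head?, p ≠ v.1 := hch1.1
    have hchT : (t' ++ [⟨q, y⟩] : List (Σ i, K i)).Chain' (fun p q => p.1 ≠ q.1) := hch1.2
    have hch2 : ((⟨p, x⟩ :: t') ++ [⟨q, y⟩] : List (Σ i, K i)).Chain'
        (fun p q => p.1 ≠ q.1) := hch
    unfold List.Chain' at hch2
    rw [List.isChain_append] at hch2
    obtain ⟨hchS, -, hlink⟩ := hch2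
    have hredT : Reduced (t' ++ [⟨q, y⟩] : List (Σ i, K i)) :=
      ⟨fun r hr => hne r (by simp at hr ⊢; tauto), hchT⟩
    have hredS : Reduced (⟨p, x⟩ :: t' : List (Σ i, K i)) :=
      ⟨fun r hr => hne r (by simp at hr ⊢; tauto), hchS⟩
    have hredL : Reduced (⟨p, x⟩ :: (t' ++ [⟨q, y⟩]) : List (Σ i, K i)) := ⟨hne, hch⟩
    have hlast : (⟨p, x⟩ :: (t' ++ [⟨q, y⟩]) : List (Σ i, K i)).getLast? = some ⟨q, y⟩ := by
      rw [show (⟨p, x⟩ :: (t' ++ [⟨q, y⟩]) : List (Σ i, K i)) = (⟨p, x⟩ :: t') ++ [⟨q, y⟩] from rfl,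
        List.getLast?_concat]
    by_cases hpi : p = i <;> by_cases hqi : q = i
    · -- p = i, q = i
      subst hpi; subst hqi
      by_cases hax : a * x = 1 <;> by_cases hya : y * a = 1
      · -- both cancel : T = S
        rcases t' with _ | ⟨u, t''⟩
        · exact hhead ⟨q, y⟩ (by simp) rfl
        · have heq : (u :: t'') ++ [⟨q, y⟩] = (⟨q, x⟩ :: (u :: t'') : List (Σ i, K i)) := by
            apply reduced_inj hredT hredS
            have e1 : plist ((u :: t'') ++ [⟨q, y⟩] : List (Σ i, K i)) =
                Monoid.CoprodI.of (a * x) * plist ((u :: t'') ++ [⟨q, y⟩]) := by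
              rw [hax]; simp
            rw [e1, map_mul, mul_assoc, ← plist_cons ⟨q, x⟩, h, plist_cons_append,
              mul_assoc, ← map_mul, hya, map_one, mul_one]
          have := congrArg List.head? heq
          simp at this
          exact hhead u (by simp) (congrArg Sigma.fst this.symm)
      · -- a*x = 1, y*a ≠ 1 : lengths differ
        have heq : (t' ++ [⟨q, y⟩] : List (Σ i, K i)) =
            (⟨q, x⟩ :: t') ++ [⟨q, y * a⟩] := by
          apply reduced_inj hredT
          · refine ⟨?_, ?_⟩
            · rintro r hr
              simp only [List.mem_append, List.mem_cons, List.not_mem_nil, or_false] at hr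
              rcases hr with (rfl | hr) | rfl
              · exact hx
              · exact hne r (by simp [hr])
              · exact hya
            · unfold List.Chain'
              rw [List.isChain_append]
              exact ⟨hchS, List.isChain_singleton _, fun u hu v hv => by
                simp at hv; subst hv; exact hlink u hu ⟨q, y⟩ (by simp)⟩
          · have e1 : plist (t' ++ [⟨q, y⟩] : List (Σ i, K i)) =
                Monoid.CoprodI.of (a * x) * plist (t' ++ [⟨q, y⟩]) := by rw [hax]; simp
            rw [e1, map_mul, mul_assoc, ← plist_cons ⟨q, x⟩, h, plist_cons_append,
              plist_concat, mul_assoc, ← map_mul]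
        have := congrArg List.length heq
        simp at this
      · -- a*x ≠ 1, y*a = 1
        have heq : (⟨q, a * x⟩ :: (t' ++ [⟨q, y⟩]) : List (Σ i, K i)) = ⟨q, x⟩ :: t' := by
          apply reduced_inj _ hredS
          · rw [plist_cons, map_mul, mul_assoc, ← plist_cons ⟨q, x⟩, h, plist_cons_append,
              mul_assoc, ← map_mul, hya, map_one, mul_one]
          · refine ⟨?_, List.isChain_cons.mpr ⟨hhead, hchT⟩⟩
            rintro r hr
            simp only [List.mem_cons, List.mem_append, List.not_mem_nil, or_false] at hr
            rcases hr with rfl | (hr | rfl)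
            · exact hax
            · exact hne r (by simp [hr])
            · exact hy
        have := congrArg List.length heq
        simp at this
      · -- neither cancels
        have heq : (⟨q, a * x⟩ :: (t' ++ [⟨q, y⟩]) : List (Σ i, K i)) =
            (⟨q, x⟩ :: t') ++ [⟨q, y * a⟩] := by
          apply reduced_inj
          · refine ⟨?_, List.isChain_cons.mpr ⟨hhead, hchT⟩⟩
            rintro r hr
            simp only [List.mem_cons, List.mem_append, List.not_mem_nil, or_false] at hr
            rcases hr with rfl | (hr | rfl)
            · exact hax
            · exact hne r (by simp [hr])
            · exact hy
          · refine ⟨?_, ?_⟩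
            · rintro r hr
              simp only [List.mem_append, List.mem_cons, List.not_mem_nil, or_false] at hr
              rcases hr with (rfl | hr) | rfl
              · exact hx
              · exact hne r (by simp [hr])
              · exact hya
            · unfold List.Chain'
              rw [List.isChain_append]
              exact ⟨hchS, List.isChain_singleton _, fun u hu v hv => by
                simp at hv; subst hv; exact hlink u hu ⟨q, y⟩ (by simp)⟩
          · rw [plist_cons, map_mul, mul_assoc, ← plist_cons ⟨q, x⟩, h, plist_cons_append,
              plist_concat, mul_assoc, ← map_mul]
        rw [show ((⟨q, x⟩ :: t') ++ [⟨q, y * a⟩] : List (Σ i, K i)) =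
          ⟨q, x⟩ :: (t' ++ [⟨q, y * a⟩]) from rfl] at heq
        simp only [List.cons.injEq, Sigma.mk.inj_iff, heq_eq_eq, true_and] at heq
        exact ha (by have := heq.1; rwa [mul_eq_right] at this)
    · -- p = i, q ≠ i
      subst hpi
      by_cases hax : a * x = 1
      · have heq : (t' ++ [⟨q, y⟩] : List (Σ i, K i)) =
            (⟨p, x⟩ :: (t' ++ [⟨q, y⟩])) ++ [⟨p, a⟩] := by
          apply reduced_inj hredT
          · refine ⟨?_, ?_⟩
            · rintro r hr
              simp only [List.mem_append, List.mem_cons, List.not_mem_nil, or_false] at hr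
              rcases hr with hr | rfl
              · exact hne r (by simp at hr ⊢; tauto)
              · exact ha
            · unfold List.Chain'
              rw [List.isChain_append]
              exact ⟨hch, List.isChain_singleton _, fun u hu v hv => by
                simp at hv; subst hv
                rw [hlast] at hu; simp at hu; subst hu; exact fun hc => hqi hc⟩
          · have e1 : plist (t' ++ [⟨q, y⟩] : List (Σ i, K i)) =
                Monoid.CoprodI.of (a * x) * plist (t' ++ [⟨q, y⟩]) := by rw [hax]; simp
            rw [e1, map_mul, mul_assoc, ← plist_cons ⟨p, x⟩, h, plist_concat]
        have := congrArg List.length heq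
        simp at this
      · have heq : (⟨p, a * x⟩ :: (t' ++ [⟨q, y⟩]) : List (Σ i, K i)) =
            (⟨p, x⟩ :: (t' ++ [⟨q, y⟩])) ++ [⟨p, a⟩] := by
          apply reduced_inj
          · refine ⟨?_, List.isChain_cons.mpr ⟨hhead, hchT⟩⟩
            rintro r hr
            simp only [List.mem_cons, List.mem_append, List.not_mem_nil, or_false] at hr
            rcases hr with rfl | (hr | rfl)
            · exact hax
            · exact hne r (by simp [hr])
            · exact hy
          · refine ⟨?_, ?_⟩
            · rintro r hr
              simp only [List.mem_append, List.mem_cons, List.not_mem_nil, or_false] at hr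
              rcases hr with hr | rfl
              · exact hne r (by simp at hr ⊢; tauto)
              · exact ha
            · unfold List.Chain'
              rw [List.isChain_append]
              exact ⟨hch, List.isChain_singleton _, fun u hu v hv => by
                simp at hv; subst hv
                rw [hlast] at hu; simp at hu; subst hu; exact fun hc => hqi hc⟩
          · rw [plist_cons, map_mul, mul_assoc, ← plist_cons ⟨p, x⟩, h, plist_concat]
        have := congrArg List.length heq
        simp at this
      
    · -- p ≠ i, q = i
      subst hqi
      by_cases hya : y * a = 1
      · have heq : (⟨q, a⟩ :: (⟨p, x⟩ :: (t' ++ [⟨q, y⟩])) : List (Σ i, K i)) =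
            ⟨p, x⟩ :: t' := by
          apply reduced_inj _ hredS
          · rw [plist_cons, h, plist_cons_append, mul_assoc, ← map_mul, hya,
              map_one, mul_one]
          · refine ⟨?_, List.isChain_cons.mpr ⟨fun v hv => by
              simp at hv; subst hv; exact fun hc => hpi hc.symm, hch⟩⟩
            rintro r hr
            simp only [List.mem_cons, List.mem_append, List.not_mem_nil, or_false] at hr
            rcases hr with rfl | (rfl | (hr | rfl))
            · exact ha
            · exact hx
            · exact hne r (by simp [hr])
            · exact hy
        have := congrArg List.length heq
        simp at this
        omega
      · have heq : (⟨q, a⟩ :: (⟨p, x⟩ :: (t' ++ [⟨q, y⟩])) : List (Σ i, K i)) =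
            (⟨p, x⟩ :: t') ++ [⟨q, y * a⟩] := by
          apply reduced_inj
          · refine ⟨?_, List.isChain_cons.mpr ⟨fun v hv => by
              simp at hv; subst hv; exact fun hc => hpi hc.symm, hch⟩⟩
            rintro r hr
            simp only [List.mem_cons, List.mem_append, List.not_mem_nil, or_false] at hr
            rcases hr with rfl | (rfl | (hr | rfl))
            · exact ha
            · exact hx
            · exact hne r (by simp [hr])
            · exact hy
          · refine ⟨?_, ?_⟩
            · rintro r hr
              simp only [List.mem_append, List.mem_cons, List.not_mem_nil, or_false] at hr
              rcases hr with (rfl | hr) | rfl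
              · exact hx
              · exact hne r (by simp [hr])
              · exact hya
            · unfold List.Chain'
              rw [List.isChain_append]
              exact ⟨hchS, List.isChain_singleton _, fun u hu v hv => by
                simp at hv; subst hv; exact hlink u hu ⟨q, y⟩ (by simp)⟩
          · rw [plist_cons, h, plist_cons_append, plist_concat, mul_assoc, ← map_mul]
        have := congrArg List.length heq
        simp at this
    · -- p ≠ i, q ≠ i
      have heq : (⟨i, a⟩ :: (⟨p, x⟩ :: (t' ++ [⟨q, y⟩])) : List (Σ i, K i)) =
          (⟨p, x⟩ :: (t' ++ [⟨q, y⟩])) ++ [⟨i, a⟩] := by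
        apply reduced_inj
        · refine ⟨?_, List.isChain_cons.mpr ⟨fun v hv => by
            simp at hv; subst hv; exact fun hc => hpi hc.symm, hch⟩⟩
          rintro r hr
          simp only [List.mem_cons, List.mem_append, List.not_mem_nil, or_false] at hr
          rcases hr with rfl | (rfl | (hr | rfl))
          · exact ha
          · exact hx
          · exact hne r (by simp [hr])
          · exact hy
        · refine ⟨?_, ?_⟩
          · rintro r hr
            simp only [List.mem_append, List.mem_cons, List.not_mem_nil, or_false] at hr
            rcases hr with hr | rfl
            · exact hne r (by simp at hr ⊢; tauto)
            · exact ha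
          · unfold List.Chain'
            rw [List.isChain_append]
            exact ⟨hch, List.isChain_singleton _, fun u hu v hv => by
              simp at hv; subst hv
              rw [hlast] at hu; simp at hu; subst hu; exact hqi⟩
        · rw [plist_cons, h, plist_concat]
      rw [show ((⟨p, x⟩ :: (t' ++ [⟨q, y⟩])) ++ [⟨i, a⟩] : List (Σ i, K i)) =
        ⟨p, x⟩ :: ((t' ++ [⟨q, y⟩]) ++ [⟨i, a⟩]) from rfl] at heq
      simp only [List.cons.injEq, Sigma.mk.inj_iff] at heq
      exact hpi heq.1.1.symm

lemma commute_of' {i : ι} {a : K i} (ha : a ≠ 1) {g : Monoid.CoprodI K}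
    (h : Monoid.CoprodI.of a * g = g * Monoid.CoprodI.of a) :
    ∃ x : K i, g = Monoid.CoprodI.of x := by
  classical
  have hg : plist (Word.equiv g).toList = g := (Word.equiv (M := K)).symm_apply_apply g
  have hred : Reduced (Word.equiv g).toList :=
    ⟨(Word.equiv g).ne_one, (Word.equiv g).chain_ne⟩
  rw [← hg] at h ⊢
  exact commute_of ha hred h

lemma conj_of_eq {i j : ι} (hij : j ≠ i) {b : K j} (hb : b ≠ 1) {x z : K i}
    (h : Monoid.CoprodI.of b * Monoid.CoprodI.of x * (Monoid.CoprodI.of b)⁻¹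
      = Monoid.CoprodI.of z) : x = 1 := by
  classical
  by_contra hx
  by_cases hz : z = 1
  · have heq : ([⟨j, b⟩, ⟨i, x⟩, ⟨j, b⁻¹⟩] : List (Σ i, K i)) = [] := by
      apply reduced_inj
      · refine ⟨?_, ?_⟩
        · rintro r hr
          simp only [List.mem_cons, List.not_mem_nil, or_false] at hr
          rcases hr with rfl | rfl | rfl
          · exact hb
          · exact hx
          · exact inv_ne_one.2 hb
        · simp only [List.Chain', List.isChain_cons_cons, List.isChain_singleton, and_true]
          exact ⟨hij, Ne.symm hij⟩
      · exact ⟨by simp, List.isChain_nil⟩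
      · have h1 : Monoid.CoprodI.of b * Monoid.CoprodI.of x * (Monoid.CoprodI.of b)⁻¹ = 1 := by
          rw [h, hz, map_one]
        simpa [mul_assoc, map_inv] using h1
    simp at heq
  · have heq : ([⟨j, b⟩, ⟨i, x⟩, ⟨j, b⁻¹⟩] : List (Σ i, K i)) = [⟨i, z⟩] := by
      apply reduced_inj
      · refine ⟨?_, ?_⟩
        · rintro r hr
          simp only [List.mem_cons, List.not_mem_nil, or_false] at hr
          rcases hr with rfl | rfl | rfl
          · exact hb
          · exact hx
          · exact inv_ne_one.2 hb
        · simp only [List.Chain', List.isChain_cons_cons, List.isChain_singleton, and_true]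
          exact ⟨hij, Ne.symm hij⟩
      · refine ⟨?_, List.isChain_singleton _⟩
        rintro r hr
        simp only [List.mem_cons, List.not_mem_nil, or_false] at hr
        rcases hr with rfl
        exact hz
      · simpa [mul_assoc, map_inv] using h
    have := congrArg List.length heq
    simp at this

end CoprodAux

/-- If `Λ` has at least two elements and each `K λ` is a nontrivial group, then in the
free product `G = ∗_λ K_λ` the normal closure of (the canonical image of) each `K_λ`
is a proper essential subgroup of `G`. -/
theorem stmt4 {ι : Type*} [Nontrivial ι] (K : ι → Type*) [∀ i, Group (K i)]
    [∀ i, Nontrivial (K i)] (i : ι) :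
    IsEssential (Subgroup.normalClosure
        (Set.range (Monoid.CoprodI.of : K i →* Monoid.CoprodI K))) ∧
      Subgroup.normalClosure
        (Set.range (Monoid.CoprodI.of : K i →* Monoid.CoprodI K)) ≠ ⊤ := by
  classical
  obtain ⟨j, hj⟩ := exists_ne i
  obtain ⟨b, hb⟩ := exists_ne (1 : K j)
  obtain ⟨a, ha⟩ := exists_ne (1 : K i)
  set E := Subgroup.normalClosure
      (Set.range (Monoid.CoprodI.of : K i →* Monoid.CoprodI K)) with hEdef
  have hEnormal : E.Normal := Subgroup.normalClosure_normal
  have hofE : ∀ x : K i, Monoid.CoprodI.of x ∈ E := fun x =>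
    Subgroup.subset_normalClosure ⟨x, rfl⟩
  refine ⟨⟨hEnormal, ?_⟩, ?_⟩
  · intro N hN hNbot hEN
    obtain ⟨g, hgN, hg1⟩ : ∃ g ∈ N, g ≠ 1 := by
      by_contra hc
      push_neg at hc
      exact hNbot ((Subgroup.eq_bot_iff_forall N).2 hc)
    have hcomm : ∀ e, e ∈ E → e * g = g * e := by
      intro e he
      have h1 : e * g * e⁻¹ * g⁻¹ ∈ N := mul_mem (hN.conj_mem g hgN e) (inv_mem hgN)
      have h2 : e * g * e⁻¹ * g⁻¹ ∈ E := by
        have h3 : e * (g * e⁻¹ * g⁻¹) ∈ E := mul_mem he (hEnormal.conj_mem e⁻¹ (inv_mem he) g)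
        simpa [mul_assoc] using h3
      have h4 : e * g * e⁻¹ * g⁻¹ ∈ E ⊓ N := ⟨h2, h1⟩
      rw [hEN] at h4
      have h5 : e * g * e⁻¹ * g⁻¹ = 1 := by simpa [Subgroup.mem_bot] using h4
      have h6 : e * g = (e * g * e⁻¹ * g⁻¹) * (g * e) := by group
      rw [h5, one_mul] at h6
      exact h6
    obtain ⟨x, hx⟩ := CoprodAux.commute_of' ha (hcomm _ (hofE a))
    have he2 : Monoid.CoprodI.of b * Monoid.CoprodI.of a * (Monoid.CoprodI.of b)⁻¹ ∈ E :=
      hEnormal.conj_mem _ (hofE a) _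
    have hc2 := hcomm _ he2
    have hc3 : Monoid.CoprodI.of a * ((Monoid.CoprodI.of b)⁻¹ * g * Monoid.CoprodI.of b)
        = ((Monoid.CoprodI.of b)⁻¹ * g * Monoid.CoprodI.of b) * Monoid.CoprodI.of a := by
      have h6 := congrArg
        (fun w => (Monoid.CoprodI.of b)⁻¹ * w * Monoid.CoprodI.of b) hc2
      simpa [mul_assoc] using h6
    obtain ⟨z, hz⟩ := CoprodAux.commute_of' ha hc3
    have h7 : Monoid.CoprodI.of b * Monoid.CoprodI.of z * (Monoid.CoprodI.of b)⁻¹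
        = Monoid.CoprodI.of x := by
      rw [← hz, ← hx]; group
    have hz1 : z = 1 := CoprodAux.conj_of_eq hj hb h7
    rw [hz1, map_one, mul_one, mul_inv_cancel] at h7
    exact hg1 (by rw [hx, ← h7])
  · intro htop
    let π : Monoid.CoprodI K →* Monoid.CoprodI K :=
      Monoid.CoprodI.lift fun l => if h : l = i then 1 else (Monoid.CoprodI.of : K l →* _)
    have hker : E ≤ π.ker := by
      apply Subgroup.normalClosure_le_normal
      rintro _ ⟨x, rfl⟩
      simp only [SetLike.mem_coe, MonoidHom.mem_ker, π, Monoid.CoprodI.lift_of, dif_pos rfl]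
      rfl
    have hbE : Monoid.CoprodI.of b ∈ E := by rw [htop]; exact Subgroup.mem_top _
    have hbker : π (Monoid.CoprodI.of b) = 1 := hker hbE
    have hπb : π (Monoid.CoprodI.of b) = Monoid.CoprodI.of b := by
      simp only [π, Monoid.CoprodI.lift_of, dif_neg hj]
    rw [hπb] at hbker
    exact hb (Monoid.CoprodI.of_injective j (by rw [hbker, map_one]))
end

section
/- Let Λ be a nonempty finite index set and (G_λ)_{λ∈Λ} a family of groups, and let G = ∏_{λ∈Λ} G_λ be their direct product. Then G has a proper essential subgroup if and only if at least one G_λ has a proper essential subgroup. -/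
/-- The direct product of a nonempty finite family of groups has a proper essential
subgroup if and only if at least one of the factors has a proper essential subgroup. -/
theorem stmt5 {ι : Type*} [Finite ι] [Nonempty ι] (G : ι → Type*) [∀ i, Group (G i)] :
    (∃ E : Subgroup (∀ i, G i), IsEssential E ∧ E ≠ ⊤) ↔
      ∃ i, ∃ E : Subgroup (G i), IsEssential E ∧ E ≠ ⊤ := by
  classical
  cases nonempty_fintype ι
  constructor
  · rintro ⟨E, ⟨hEnorm, hEess⟩, hEtop⟩
    by_contra h
    push_neg at h
    apply hEtop
    -- For each i, the pullback of E along mulSingle is essential in G i, hence ⊤.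
    have key : ∀ i (a : G i), Pi.mulSingle i a ∈ E := by
      intro i
      set Ei : Subgroup (G i) := E.comap (MonoidHom.mulSingle G i) with hEi
      have hnorm : Ei.Normal := by
        constructor
        intro x hx g
        have : Pi.mulSingle i (g * x * g⁻¹) =
            Pi.mulSingle i g * Pi.mulSingle i x * (Pi.mulSingle i g)⁻¹ := by
          simp [Pi.mulSingle_mul, Pi.mulSingle_inv]
        simp only [Ei, Subgroup.mem_comap, MonoidHom.mulSingle_apply] at hx ⊢
        rw [this]
        exact hEnorm.conj_mem _ hx _
      have hess : IsEssential Ei := by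
        refine ⟨hnorm, ?_⟩
        intro N hN hNbot
        set N' : Subgroup (∀ i, G i) := N.map (MonoidHom.mulSingle G i) with hN'
        have hN'norm : N'.Normal := by
          constructor
          rintro x ⟨n, hn, rfl⟩ g
          refine ⟨g i * n * (g i)⁻¹, hN.conj_mem n hn (g i), ?_⟩
          simp only [MonoidHom.mulSingle_apply]
          ext j
          by_cases hj : j = i
          · subst hj; simp
          · simp [Pi.mulSingle_eq_of_ne hj]
        have hN'bot : N' ≠ ⊥ := by
          intro hb
          apply hNbot
          rw [Subgroup.eq_bot_iff_forall] at hb ⊢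
          intro n hn
          have := hb (Pi.mulSingle i n) ⟨n, hn, rfl⟩
          calc n = Pi.mulSingle i n i := by simp
            _ = 1 := by rw [this]; simp
        have := hEess N' hN'norm hN'bot
        rw [Ne, Subgroup.eq_bot_iff_forall] at this ⊢
        intro hcontra
        apply this
        rintro x ⟨hxE, n, hnN, rfl⟩
        have hn1 : n = 1 := hcontra n ⟨hxE, hnN⟩
        simp [hn1]
      have hEiTop : Ei = ⊤ := h i Ei hess
      intro a
      have : a ∈ Ei := hEiTop ▸ Subgroup.mem_top a
      simpa [Ei] using this
    rw [eq_top_iff]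
    intro x _
    rw [← Finset.noncommProd_mulSingle x]
    exact Subgroup.noncommProd_mem E _ fun i _ => key i (x i)
  · rintro ⟨i, E, ⟨hEnorm, hEess⟩, hEtop⟩
    refine ⟨E.comap (Pi.evalMonoidHom G i), ⟨Subgroup.Normal.comap hEnorm _, ?_⟩, ?_⟩
    · intro N hN hNbot
      by_cases hmap : N.map (Pi.evalMonoidHom G i) = ⊥
      · -- N ≤ ker, so N ≤ E'
        rw [Ne, Subgroup.eq_bot_iff_forall]
        intro hcontra
        apply hNbot
        rw [Subgroup.eq_bot_iff_forall]
        intro n hn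
        refine hcontra n ⟨?_, hn⟩
        have : n i = 1 := by
          rw [Subgroup.eq_bot_iff_forall] at hmap
          exact hmap (n i) ⟨n, hn, rfl⟩
        show n i ∈ E
        rw [this]; exact E.one_mem
      · have hmapnorm : (N.map (Pi.evalMonoidHom G i)).Normal := by
          constructor
          rintro x ⟨n, hn, rfl⟩ g
          refine ⟨Pi.mulSingle i g * n * (Pi.mulSingle i g)⁻¹,
            hN.conj_mem n hn _, ?_⟩
          simp [Pi.evalMonoidHom]
        have := hEess _ hmapnorm hmap
        rw [Ne, Subgroup.eq_bot_iff_forall] at this ⊢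
        intro hcontra
        apply this
        rintro x ⟨hxE, n, hnN, rfl⟩
        have : n = 1 := hcontra n ⟨hxE, hnN⟩
        simp [this]
    · intro htop
      apply hEtop
      rw [eq_top_iff] at htop ⊢
      intro a _
      have : Pi.mulSingle i a ∈ E.comap (Pi.evalMonoidHom G i) :=
        htop (Subgroup.mem_top _)
      simpa using this
end

section
/- Let Λ be a nonempty finite index set and (G_λ)_{λ∈Λ} a family of groups, and let G = ∏_{λ∈Λ} G_λ be their direct product. Then e(G) = ∏_{λ∈Λ} e(G_λ), i.e., the intersection of all essential subgroups of G equals the direct product of the subgroups e(G_λ). -/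
/-- `essCore G` (denoted `e(G)`) is the intersection of all essential subgroups of `G`. -/
def essCore (G : Type*) [Group G] : Subgroup G :=
  sInf {E : Subgroup G | IsEssential E}

lemma ne_bot_iff_exists {G : Type*} [Group G] (H : Subgroup G) :
    H ≠ ⊥ ↔ ∃ x ∈ H, x ≠ 1 := by
  rw [ne_eq, Subgroup.eq_bot_iff_forall]
  push_neg
  rfl

/-- For a nonempty finite family of groups, `e(∏ G_λ) = ∏ e(G_λ)`. -/
theorem stmt6 {ι : Type*} [Finite ι] [Nonempty ι] (G : ι → Type*) [∀ i, Group (G i)] :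
    essCore (∀ i, G i) = Subgroup.pi Set.univ (fun i => essCore (G i)) := by
  classical
  apply le_antisymm
  · -- essCore (∏ G) ≤ ∏ essCore (G i)
    intro g hg
    rw [Subgroup.mem_pi]
    intro i _
    rw [essCore, Subgroup.mem_sInf]
    intro E hE
    -- consider the preimage of E under evaluation at i
    have hsurj : Function.Surjective (Pi.evalMonoidHom G i) := fun x =>
      ⟨Function.update 1 i x, Function.update_self i x 1⟩
    have hFess : IsEssential (E.comap (Pi.evalMonoidHom G i)) := by
      refine ⟨hE.1.comap _, fun N hN hNbot => ?_⟩
      rw [ne_bot_iff_exists]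
      by_cases hker : ∃ n ∈ N, n ≠ 1 ∧ n i = 1
      · obtain ⟨n, hnN, hn1, hni⟩ := hker
        exact ⟨n, ⟨by simp [Subgroup.mem_comap, hni, E.one_mem], hnN⟩, hn1⟩
      · push_neg at hker
        have hMnorm : (N.map (Pi.evalMonoidHom G i)).Normal := hN.map _ hsurj
        have hMbot : N.map (Pi.evalMonoidHom G i) ≠ ⊥ := by
          obtain ⟨n, hnN, hn1⟩ := (ne_bot_iff_exists N).mp hNbot
          exact (ne_bot_iff_exists _).mpr
            ⟨n i, Subgroup.mem_map_of_mem _ hnN, hker n hnN hn1⟩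
        obtain ⟨x, hxEM, hx1⟩ := (ne_bot_iff_exists _).mp (hE.2 _ hMnorm hMbot)
        obtain ⟨n, hnN, rfl⟩ := hxEM.2
        refine ⟨n, ⟨?_, hnN⟩, ?_⟩
        · exact hxEM.1
        · rintro rfl; exact hx1 rfl
    exact Subgroup.mem_sInf.mp hg _ hFess
  · -- ∏ essCore (G i) ≤ essCore (∏ G)
    intro g hg
    rw [essCore, Subgroup.mem_sInf]
    intro E hE
    apply Subgroup.pi_mem_of_mulSingle_mem
    intro i
    -- the comap of E under mulSingle is essential in G i
    have hEi : IsEssential (E.comap (MonoidHom.mulSingle G i)) := by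
      refine ⟨hE.1.comap _, fun N hN hNbot => ?_⟩
      have hinj := Pi.mulSingle_injective (M := G) i
      have hMnorm : (N.map (MonoidHom.mulSingle G i)).Normal := by
        constructor
        rintro x ⟨n, hnN, rfl⟩ p
        refine ⟨p i * n * (p i)⁻¹, hN.conj_mem n hnN (p i), ?_⟩
        funext j
        by_cases h : j = i
        · subst h; simp
        · simp [Pi.mulSingle_apply, h]
      have hMbot : N.map (MonoidHom.mulSingle G i) ≠ ⊥ := by
        obtain ⟨n, hnN, hn1⟩ := (ne_bot_iff_exists N).mp hNbot
        refine (ne_bot_iff_exists _).mpr ⟨_, Subgroup.mem_map_of_mem _ hnN, ?_⟩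
        intro h
        exact hn1 (hinj (by simpa using h))
      obtain ⟨x, hxEM, hx1⟩ := (ne_bot_iff_exists _).mp (hE.2 _ hMnorm hMbot)
      obtain ⟨n, hnN, rfl⟩ := hxEM.2
      refine (ne_bot_iff_exists _).mpr ⟨n, ⟨hxEM.1, hnN⟩, ?_⟩
      rintro rfl
      exact hx1 (by simp)
    have : g i ∈ essCore (G i) := (Subgroup.mem_pi _).mp hg i trivial
    exact Subgroup.mem_sInf.mp this _ hEi
end

section
/- Let G be a nontrivial group. Then soc(G) = e(G) if and only if soc(G) is an essential subgroup of the group e(G) (where soc(G), which is always contained in e(G), is viewed as a subgroup of the group e(G)). -/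
/-- A *minimal normal subgroup* of `G` is a nontrivial normal subgroup containing no
normal subgroup of `G` other than itself and the trivial one. -/
def IsMinNormal {G : Type*} [Group G] (N : Subgroup G) : Prop :=
  N.Normal ∧ N ≠ ⊥ ∧ ∀ M : Subgroup G, M.Normal → M ≤ N → M = ⊥ ∨ M = N

/-- The *socle* of `G` is the subgroup generated by all minimal normal subgroups of `G`. -/
def socle (G : Type*) [Group G] : Subgroup G :=
  sSup {N : Subgroup G | IsMinNormal N}

lemma normal_sSup {G : Type*} [Group G] {S : Set (Subgroup G)}
    (h : ∀ N ∈ S, N.Normal) : (sSup S).Normal := by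
  constructor
  intro x hx g
  have key : sSup S ≤ Subgroup.comap (MulAut.conj g).toMonoidHom (sSup S) := by
    refine sSup_le fun N hN n hn => ?_
    simp only [Subgroup.mem_comap, MulEquiv.coe_toMonoidHom, MulAut.conj_apply]
    exact le_sSup hN ((h N hN).conj_mem n hn g)
  have := key hx
  simpa only [Subgroup.mem_comap, MulEquiv.coe_toMonoidHom, MulAut.conj_apply] using this

lemma socle_normal (G : Type*) [Group G] : (socle G).Normal :=
  normal_sSup fun _ hN => hN.1

lemma essCore_normal (G : Type*) [Group G] : (essCore G).Normal := by
  constructor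
  intro x hx g
  rw [essCore, Subgroup.mem_sInf] at hx ⊢
  exact fun E hE => hE.1.conj_mem x (hx E hE) g

lemma socle_le_essCore {G : Type*} [Group G] : socle G ≤ essCore G := by
  refine sSup_le fun N hN => le_sInf fun E hE => ?_
  obtain ⟨hNnorm, hNbot, hNmin⟩ := hN
  obtain ⟨hEnorm, hEess⟩ := hE
  have : (E ⊓ N).Normal := @Subgroup.normal_inf_normal _ _ E N hEnorm hNnorm
  rcases hNmin (E ⊓ N) this inf_le_right with h | h
  · exact absurd h (hEess N hNnorm hNbot)
  · exact h ▸ inf_le_left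

/-- For a nontrivial group `G`, `soc(G) = e(G)` iff `soc(G)` is an essential subgroup of
the group `e(G)`. -/
theorem stmt7 {G : Type*} [Group G] [Nontrivial G] :
    socle G = essCore G ↔ IsEssential ((socle G).subgroupOf (essCore G)) := by
  have hsoc : (socle G).Normal := socle_normal G
  have hec : (essCore G).Normal := essCore_normal G
  constructor
  · intro h
    rw [h, Subgroup.subgroupOf_self]
    exact ⟨⟨fun x _ g => Subgroup.mem_top _⟩, fun N hN hNbot => by simpa using hNbot⟩
  · rintro ⟨-, hess⟩
    refine le_antisymm socle_le_essCore ?_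
    -- Zorn: a maximal normal subgroup M with M ⊓ socle G = ⊥
    set s : Set (Subgroup G) := {M | M.Normal ∧ M ⊓ socle G = ⊥} with hs
    have hchain : ∀ c ⊆ s, IsChain (· ≤ ·) c → ∃ ub ∈ s, ∀ z ∈ c, z ≤ ub := by
      intro c hcs hc
      rcases c.eq_empty_or_nonempty with rfl | hcne
      · exact ⟨⊥, ⟨⟨by simp⟩, by simp⟩, by simp⟩
      refine ⟨sSup c, ⟨?_, ?_⟩, fun z hz => le_sSup hz⟩
      · exact normal_sSup fun N hN => (hcs hN).1
      · rw [eq_bot_iff]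
        intro x hx
        rw [Subgroup.mem_inf] at hx
        obtain ⟨hx1, hx2⟩ := hx
        rw [Subgroup.mem_sSup_of_directedOn hcne hc.directedOn] at hx1
        obtain ⟨H, hHc, hxH⟩ := hx1
        have := (hcs hHc).2
        rw [eq_bot_iff] at this
        exact this ⟨hxH, hx2⟩
    obtain ⟨M, ⟨hMnorm, hMdisj⟩, hMmax⟩ := zorn_le₀ s hchain
    haveI := hsoc; haveI := hMnorm
    -- socle G ⊔ M is essential in G
    have hess' : IsEssential (socle G ⊔ M) := by
      refine ⟨Subgroup.sup_normal _ _, fun K hK hKbot hinf => ?_⟩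
      haveI := hK
      have hMK : (M ⊔ K) ⊓ socle G = ⊥ := by
        rw [eq_bot_iff]
        intro x hx
        rw [Subgroup.mem_inf] at hx
        obtain ⟨hx1, hx2⟩ := hx
        have hxset : (x : G) ∈ (↑(M ⊔ K) : Set G) := hx1
        rw [Subgroup.mul_normal M K, Set.mem_mul] at hxset
        obtain ⟨m, hm, k, hk, rfl⟩ := hxset
        have hk1 : k ∈ (socle G ⊔ M) ⊓ K := by
          rw [Subgroup.mem_inf]
          refine ⟨?_, hk⟩
          have hma : m⁻¹ ∈ socle G ⊔ M := (le_sup_right : M ≤ socle G ⊔ M) (M.inv_mem hm)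
          have hmb : m * k ∈ socle G ⊔ M := (le_sup_left : socle G ≤ socle G ⊔ M) hx2
          have : m⁻¹ * (m * k) ∈ socle G ⊔ M := mul_mem hma hmb
          simpa [mul_assoc] using this
        rw [hinf] at hk1
        have hkone : k = 1 := by simpa using hk1
        subst hkone
        have : m ∈ M ⊓ socle G := Subgroup.mem_inf.mpr ⟨hm, by simpa using hx2⟩
        rw [hMdisj] at this
        simpa using this
      have hmem : M ⊔ K ∈ s := ⟨Subgroup.sup_normal _ _, hMK⟩
      have hle : M ⊔ K ≤ M := hMmax hmem le_sup_left
      have hKM : K ≤ socle G ⊔ M := (le_sup_right.trans hle).trans le_sup_right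
      apply hKbot
      rw [← hinf, inf_eq_right.mpr hKM]
    have h1 : essCore G ≤ socle G ⊔ M := sInf_le hess'
    -- essCore G ⊓ M = ⊥ using essentiality of socle in essCore
    have h2 : essCore G ⊓ M = ⊥ := by
      have hnorm : (essCore G ⊓ M).Normal :=
        @Subgroup.normal_inf_normal _ _ _ _ hec hMnorm
      have hsub : socle G ⊓ (essCore G ⊓ M) = ⊥ := by
        rw [eq_bot_iff, ← hMdisj]
        exact le_inf (inf_le_right.trans inf_le_right) inf_le_left
      have hcomb : (socle G ⊓ (essCore G ⊓ M)).subgroupOf (essCore G) =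
          (socle G).subgroupOf (essCore G) ⊓ (essCore G ⊓ M).subgroupOf (essCore G) :=
        Subgroup.comap_inf _ _ _
      have hbot : (socle G).subgroupOf (essCore G) ⊓
          (essCore G ⊓ M).subgroupOf (essCore G) = ⊥ := by
        rw [← hcomb, hsub, Subgroup.bot_subgroupOf]
      by_contra hne
      have hN'bot : (essCore G ⊓ M).subgroupOf (essCore G) ≠ ⊥ := fun hb =>
        hne ((Subgroup.subgroupOf_eq_bot.mp hb).eq_bot_of_le inf_le_left)
      exact hess _ (hnorm.subgroupOf _) hN'bot hbot
    -- conclude essCore G ≤ socle G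
    intro x hx
    have hxset : (x : G) ∈ (↑(socle G ⊔ M) : Set G) := h1 hx
    rw [Subgroup.mul_normal (socle G) M, Set.mem_mul] at hxset
    obtain ⟨n, hn, m, hm, rfl⟩ := hxset
    have hmE : m ∈ essCore G ⊓ M := by
      rw [Subgroup.mem_inf]
      refine ⟨?_, hm⟩
      have : n⁻¹ * (n * m) ∈ essCore G :=
        mul_mem ((essCore G).inv_mem (socle_le_essCore hn)) hx
      simpa [mul_assoc] using this
    rw [h2] at hmE
    have : m = 1 := by simpa using hmE
    subst this
    simpa using hn
end

section
/- Let G be a nontrivial group. Then G contains no proper essential subgroup if and only if every normal subgroup N of G is a direct summand of G, i.e., for every normal subgroup N of G there exists a normal subgroup T of G with N ∩ T = {1} and NT = G. -/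
/-- A nontrivial group `G` contains no proper essential subgroup iff every normal
subgroup of `G` is a direct summand of `G`. -/
theorem stmt9 {G : Type*} [Group G] [Nontrivial G] :
    (¬ ∃ E : Subgroup G, IsEssential E ∧ E ≠ ⊤) ↔
      ∀ N : Subgroup G, N.Normal →
        ∃ T : Subgroup G, T.Normal ∧ N ⊓ T = ⊥ ∧ N ⊔ T = ⊤ := by
  constructor
  · intro h N hN
    push_neg at h
    -- Zorn: pick T normal maximal with N ⊓ T = ⊥
    set s : Set (Subgroup G) := {T | T.Normal ∧ N ⊓ T = ⊥} with hs
    have chain : ∀ c ⊆ s, IsChain (· ≤ ·) c → ∃ ub ∈ s, ∀ z ∈ c, z ≤ ub := by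
      intro c hcs hc
      rcases c.eq_empty_or_nonempty with rfl | hcne
      · exact ⟨⊥, ⟨inferInstance, inf_bot_eq N⟩, fun z hz => absurd hz (Set.notMem_empty z)⟩
      · refine ⟨sSup c, ⟨?_, ?_⟩, fun z hz => le_sSup hz⟩
        · constructor
          intro n hn g
          rw [Subgroup.mem_sSup_of_directedOn hcne hc.directedOn] at hn ⊢
          obtain ⟨U, hUc, hnU⟩ := hn
          exact ⟨U, hUc, (hcs hUc).1.conj_mem n hnU g⟩
        · rw [eq_bot_iff]
          intro x hx
          obtain ⟨hxN, hxS⟩ := hx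
          obtain ⟨U, hUc, hxU⟩ :=
            (Subgroup.mem_sSup_of_directedOn hcne hc.directedOn).1 hxS
          have : x ∈ N ⊓ U := ⟨hxN, hxU⟩
          rw [(hcs hUc).2] at this
          exact this
    obtain ⟨T, ⟨hTnorm, hTint⟩, hTmax⟩ := zorn_le₀ s chain
    refine ⟨T, hTnorm, hTint, ?_⟩
    -- N ⊔ T is essential, hence equals ⊤
    apply h (N ⊔ T)
    haveI := hN
    haveI := hTnorm
    refine ⟨Subgroup.sup_normal N T, ?_⟩
    intro K hKnorm hKne hNTK
    haveI := hKnorm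
    -- T ⊓ K = ⊥
    have hTK : T ⊓ K = ⊥ := by
      rw [eq_bot_iff]
      calc T ⊓ K ≤ (N ⊔ T) ⊓ K := inf_le_inf_right K le_sup_right
        _ = ⊥ := hNTK
    -- N ⊓ (T ⊔ K) = ⊥
    have hkey : N ⊓ (T ⊔ K) = ⊥ := by
      rw [eq_bot_iff]
      rintro x ⟨hxN, hxTK⟩
      have hxTK' : x ∈ (↑(T ⊔ K) : Set G) := hxTK
      rw [Subgroup.mul_normal T K] at hxTK'
      obtain ⟨t, ht, k, hk, rfl⟩ := hxTK'
      have hkmem : k ∈ (N ⊔ T) ⊓ K := by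
        refine ⟨?_, hk⟩
        have : k = t⁻¹ * (t * k) := by group
        rw [this]
        exact mul_mem (le_sup_right (α := Subgroup G) (a := N) (inv_mem ht))
          (le_sup_left (α := Subgroup G) (b := T) hxN)
      rw [hNTK] at hkmem
      rw [Subgroup.mem_bot] at hkmem
      subst hkmem
      have : t * 1 ∈ N ⊓ T := ⟨hxN, by simpa using ht⟩
      rw [hTint] at this
      exact this
    -- maximality ⇒ K ≤ T ⇒ K = ⊥, contradiction
    have hle : T ⊔ K ≤ T :=
      hTmax ⟨Subgroup.sup_normal T K, hkey⟩ le_sup_left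
    have hKT : K ≤ T := le_trans le_sup_right hle
    apply hKne
    rw [eq_bot_iff, ← hTK]
    exact le_inf hKT le_rfl
  · rintro h ⟨E, ⟨hEnorm, hEess⟩, hEne⟩
    obtain ⟨T, hTnorm, hint, hsup⟩ := h E hEnorm
    have hT : T ≠ ⊥ := by
      rintro rfl
      rw [sup_bot_eq] at hsup
      exact hEne hsup
    exact hEess T hTnorm hT hint
end

section
/- Let G be a nontrivial group. Then G contains no proper essential subgroup if and only if every nontrivial normal subgroup N of G, regarded as a group in its own right, contains no proper essential subgroup. -/
section Aux

variable {G : Type*} [Group G]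

/-- Membership in a join with a normal subgroup decomposes as a product. -/
lemma mem_sup_normal' {H B : Subgroup G} (hB : B.Normal) {x : G} (hx : x ∈ H ⊔ B) :
    ∃ h ∈ H, ∃ b ∈ B, h * b = x := by
  haveI := hB
  have hx' : x ∈ (↑(H ⊔ B) : Set G) := hx
  rw [Subgroup.mul_normal] at hx'
  exact Set.mem_mul.mp hx'

lemma exists_ne_one_of_ne_bot {H : Subgroup G} (h : H ≠ ⊥) : ∃ x ∈ H, x ≠ (1 : G) := by
  rw [Subgroup.ne_bot_iff_exists_ne_one] at h
  obtain ⟨a, ha⟩ := h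
  exact ⟨(a : G), a.2, fun h1 => ha (Subtype.ext h1)⟩

lemma isEssential_comap_equiv {H : Type*} [Group H] (e : G ≃* H)
    {E : Subgroup H} (hE : IsEssential E) : IsEssential (E.comap e.toMonoidHom) := by
  obtain ⟨hnorm, hess⟩ := hE
  refine ⟨hnorm.comap e.toMonoidHom, ?_⟩
  intro N hN hNbot hinf
  have hmapN : (N.map e.toMonoidHom).Normal := hN.map _ e.surjective
  have hmapbot : N.map e.toMonoidHom ≠ ⊥ := by
    intro hmap
    apply hNbot
    rw [eq_bot_iff]
    intro x hx
    have hx' : e x ∈ N.map e.toMonoidHom := ⟨x, hx, rfl⟩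
    rw [hmap, Subgroup.mem_bot] at hx'
    have hx1 : x = 1 := by
      have := congrArg e.symm hx'
      simpa using this
    simp [hx1]
  refine hess _ hmapN hmapbot ?_
  rw [eq_bot_iff] at hinf ⊢
  rintro x ⟨hxE, y, hyN, rfl⟩
  have : e.symm (e y) ∈ (⊥ : Subgroup G) := by
    apply hinf
    refine ⟨?_, ?_⟩
    · show e (e.symm (e y)) ∈ E
      rwa [e.apply_symm_apply]
    · rwa [e.symm_apply_apply]
  rw [e.symm_apply_apply] at this
  rw [Subgroup.mem_bot] at this
  subst this
  simp

end Aux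

/-- A nontrivial group `G` contains no proper essential subgroup iff every nontrivial
normal subgroup of `G`, regarded as a group in its own right, contains no proper
essential subgroup. -/
theorem stmt10 {G : Type*} [Group G] [Nontrivial G] :
    (¬ ∃ E : Subgroup G, IsEssential E ∧ E ≠ ⊤) ↔
      ∀ N : Subgroup G, N.Normal → N ≠ ⊥ →
        ¬ ∃ E : Subgroup ↥N, IsEssential E ∧ E ≠ ⊤ := by
  constructor
  · -- forward direction
    intro hG N hN hNbot
    rintro ⟨E, ⟨hEnorm, hEess⟩, hEtop⟩
    haveI := hN
    -- Zorn: maximal normal B with B ⊓ N = ⊥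
    obtain ⟨B, -, hBmax⟩ := zorn_le_nonempty₀
        {B : Subgroup G | B.Normal ∧ B ⊓ N = ⊥}
        (by
          intro c hc hchain y hy
          refine ⟨sSup c, ⟨?_, ?_⟩, fun z hz => le_sSup hz⟩
          · constructor
            intro x hx g
            rw [Subgroup.mem_sSup_of_directedOn ⟨y, hy⟩ hchain.directedOn] at hx ⊢
            obtain ⟨H, hHc, hxH⟩ := hx
            exact ⟨H, hHc, (hc hHc).1.conj_mem x hxH g⟩
          · rw [eq_bot_iff]
            intro x hx
            rw [Subgroup.mem_inf] at hx
            obtain ⟨hx1, hx2⟩ := hx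
            rw [Subgroup.mem_sSup_of_directedOn ⟨y, hy⟩ hchain.directedOn] at hx1
            obtain ⟨H, hHc, hxH⟩ := hx1
            have : x ∈ H ⊓ N := ⟨hxH, hx2⟩
            rwa [(hc hHc).2] at this)
        ⊥ ⟨inferInstance, bot_inf_eq N⟩
    obtain ⟨hBnorm, hBN⟩ := hBmax.prop
    haveI := hBnorm
    -- N and B commute elementwise
    have hcomm : ∀ n ∈ N, ∀ b ∈ B, Commute n b := by
      intro n hn b hb
      exact Subgroup.commute_of_normal_of_disjoint N B hN hBnorm
        (disjoint_iff.mpr (by rw [inf_comm]; exact hBN)) n b hn hb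
    -- N ⊔ B is essential, hence equals ⊤
    have hsup_ess : IsEssential (N ⊔ B) := by
      refine ⟨inferInstance, ?_⟩
      intro C hC hCbot hinf
      haveI := hC
      have hBC : B ⊔ C ∈ {B : Subgroup G | B.Normal ∧ B ⊓ N = ⊥} := by
        refine ⟨inferInstance, ?_⟩
        rw [eq_bot_iff]
        rintro x ⟨hx1, hx2⟩
        obtain ⟨b, hb, cc, hcc, rfl⟩ := mem_sup_normal' hC hx1
        have hcmem : cc ∈ (N ⊔ B) ⊓ C := by
          refine ⟨?_, hcc⟩
          have : cc = b⁻¹ * (b * cc) := by group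
          rw [this]
          exact Subgroup.mul_mem _ (Subgroup.mem_sup_right (inv_mem hb))
            (Subgroup.mem_sup_left hx2)
        rw [hinf, Subgroup.mem_bot] at hcmem
        subst hcmem
        rw [mul_one] at hx2 ⊢
        have : b ∈ B ⊓ N := ⟨hb, hx2⟩
        rwa [hBN] at this
      have hle : B ⊔ C ≤ B := hBmax.le_of_ge hBC le_sup_left
      have hCle : C ≤ B := le_trans le_sup_right hle
      apply hCbot
      rw [eq_bot_iff]
      intro c hcmem
      have : c ∈ (N ⊔ B) ⊓ C := ⟨Subgroup.mem_sup_right (hCle hcmem), hcmem⟩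
      rwa [hinf] at this
    have hsup_top : N ⊔ B = ⊤ := by
      by_contra h
      exact hG ⟨N ⊔ B, hsup_ess, h⟩
    -- lift E to a subgroup of G
    set Et : Subgroup G := E.map N.subtype with hEt
    have hEtle : Et ≤ N := Subgroup.map_subtype_le E
    have hEtN : ∀ x ∈ Et, x ∈ N := fun x hx => hEtle hx
    -- Et is normal in G
    have hEtnorm : Et.Normal := by
      constructor
      intro x hx g
      have hgmem : g ∈ N ⊔ B := by rw [hsup_top]; trivial
      obtain ⟨n, hn, b, hb, rfl⟩ := mem_sup_normal' hBnorm hgmem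
      have hbx : b * x * b⁻¹ = x := by
        have hco : x * b = b * x := hcomm x (hEtle hx) b hb
        rw [← hco, mul_inv_cancel_right]
      have h1 : n * b * x * (n * b)⁻¹ = n * (b * x * b⁻¹) * n⁻¹ := by group
      rw [h1, hbx]
      obtain ⟨y, hy, rfl⟩ := hx
      have := hEnorm.conj_mem y hy ⟨n, hn⟩
      exact ⟨_, this, rfl⟩
    haveI := hEtnorm
    -- Et ≠ N
    have hEtne : Et ≠ N := by
      intro h
      apply hEtop
      rw [eq_top_iff]
      rintro y -
      have : (y : G) ∈ Et := by rw [h]; exact y.2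
      obtain ⟨z, hz, hzy⟩ := this
      have : z = y := Subtype.ext hzy
      rwa [this] at hz
    obtain ⟨n₀, hn₀N, hn₀E⟩ : ∃ x ∈ N, x ∉ Et := by
      by_contra h
      push_neg at h
      exact hEtne (le_antisymm hEtle h)
    -- F := Et ⊔ B is a proper essential subgroup of G: contradiction
    have hFtop : Et ⊔ B ≠ ⊤ := by
      intro h
      apply hn₀E
      have : n₀ ∈ Et ⊔ B := by rw [h]; trivial
      obtain ⟨e, he, b, hb, hebn⟩ := mem_sup_normal' hBnorm this
      have hbBN : b ∈ B ⊓ N := by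
        refine ⟨hb, ?_⟩
        have : b = e⁻¹ * n₀ := by rw [← hebn]; group
        rw [this]
        exact Subgroup.mul_mem _ (inv_mem (hEtle he)) hn₀N
      rw [hBN, Subgroup.mem_bot] at hbBN
      rw [hbBN, mul_one] at hebn
      rwa [hebn] at he
    have hFess : IsEssential (Et ⊔ B) := by
      refine ⟨inferInstance, ?_⟩
      intro C hC hCbot hinf
      haveI := hC
      set P : Subgroup G := (C ⊔ B) ⊓ N with hP
      by_cases hPbot : P = ⊥
      · -- then C = ⊥, contradiction
        apply hCbot
        rw [eq_bot_iff]
        intro c hc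
        have hcmem : c ∈ N ⊔ B := by rw [hsup_top]; trivial
        obtain ⟨m, hm, b, hb, hmbc⟩ := mem_sup_normal' hBnorm hcmem
        have hmP : m ∈ P := by
          refine ⟨?_, hm⟩
          have : m = c * b⁻¹ := by rw [← hmbc]; group
          rw [this]
          exact Subgroup.mul_mem _ (Subgroup.mem_sup_left hc)
            (Subgroup.mem_sup_right (inv_mem hb))
        rw [hPbot, Subgroup.mem_bot] at hmP
        rw [hmP, one_mul] at hmbc
        subst hmbc
        have : b ∈ (Et ⊔ B) ⊓ C := ⟨Subgroup.mem_sup_right hb, hc⟩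
        rwa [hinf] at this
      · -- P gives a nontrivial normal subgroup of N
        have hPnormal : P.Normal := inferInstance
        have hPle : P ≤ N := inf_le_right
        set P' : Subgroup ↥N := P.comap N.subtype with hP'
        have hP'norm : P'.Normal := hPnormal.comap N.subtype
        have hP'bot : P' ≠ ⊥ := by
          obtain ⟨x, hxP, hx1⟩ := exists_ne_one_of_ne_bot hPbot
          intro h
          have : (⟨x, hPle hxP⟩ : ↥N) ∈ P' := hxP
          rw [h, Subgroup.mem_bot] at this
          exact hx1 (congrArg Subtype.val this)
        have := hEess P' hP'norm hP'bot
        obtain ⟨y, hy, hy1⟩ := exists_ne_one_of_ne_bot this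
        obtain ⟨hyE, hyP⟩ := hy
        set x : G := (y : G) with hx
        have hxEt : x ∈ Et := ⟨y, hyE, rfl⟩
        have hxP : x ∈ P := hyP
        have hx1 : x ≠ 1 := by
          intro h
          exact hy1 (Subtype.ext h)
        obtain ⟨c, hc, b, hb, hcbx⟩ := mem_sup_normal' hBnorm hxP.1
        have hcmem : c ∈ (Et ⊔ B) ⊓ C := by
          refine ⟨?_, hc⟩
          have : c = x * b⁻¹ := by rw [← hcbx]; group
          rw [this]
          exact Subgroup.mul_mem _ (Subgroup.mem_sup_left hxEt)
            (Subgroup.mem_sup_right (inv_mem hb))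
        rw [hinf, Subgroup.mem_bot] at hcmem
        rw [hcmem, one_mul] at hcbx
        have hxBN : x ∈ B ⊓ N := ⟨hcbx ▸ hb, hPle hxP⟩
        rw [hBN, Subgroup.mem_bot] at hxBN
        exact hx1 hxBN
    exact hG ⟨Et ⊔ B, hFess, hFtop⟩
  · -- backward direction
    intro h
    rintro ⟨E, hE, hEtop⟩
    have htopbot : (⊤ : Subgroup G) ≠ ⊥ := by
      intro hh
      obtain ⟨a, b, hab⟩ := exists_pair_ne G
      apply hab
      have ha : a ∈ (⊤ : Subgroup G) := trivial
      have hb : b ∈ (⊤ : Subgroup G) := trivial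
      rw [hh, Subgroup.mem_bot] at ha hb
      rw [ha, hb]
    refine h ⊤ inferInstance htopbot ⟨E.comap (Subgroup.topEquiv (G := G)).toMonoidHom,
      isEssential_comap_equiv Subgroup.topEquiv hE, ?_⟩
    intro hcomap
    apply hEtop
    rw [eq_top_iff]
    intro g _
    have : (⟨g, trivial⟩ : ↥(⊤ : Subgroup G)) ∈ E.comap (Subgroup.topEquiv (G := G)).toMonoidHom := by
      rw [hcomap]; trivial
    exact this
end

section
/- Let G be a nontrivial group. Then G contains no proper essential subgroup if and only if for every proper normal subgroup N of G and every normal subgroup A of G containing N, there exists a normal subgroup B of G containing N such that G = AB and A ∩ B = N. -/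
open Pointwise


/-- A nontrivial group `G` contains no proper essential subgroup iff for every proper
normal subgroup `N` of `G` and every normal subgroup `A ⊇ N`, there is a normal
subgroup `B ⊇ N` with `G = AB` and `A ∩ B = N`. -/
theorem stmt11 {G : Type*} [Group G] [Nontrivial G] :
    (¬ ∃ E : Subgroup G, IsEssential E ∧ E ≠ ⊤) ↔
      ∀ N : Subgroup G, N.Normal → N ≠ ⊤ →
        ∀ A : Subgroup G, A.Normal → N ≤ A →
          ∃ B : Subgroup G, B.Normal ∧ N ≤ B ∧ A ⊔ B = ⊤ ∧ A ⊓ B = N := by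
  constructor
  · intro h N hN hNtop A hA hNA
    -- Zorn's lemma on the set of normal subgroups B ⊇ N with A ⊓ B = N
    set S : Set (Subgroup G) := {B | B.Normal ∧ N ≤ B ∧ A ⊓ B = N} with hSdef
    have hNS : N ∈ S := ⟨hN, le_refl N, inf_eq_right.mpr hNA⟩
    obtain ⟨B, -, hBS, hmax⟩ :=
      zorn_le_nonempty₀ S (fun c hcS hchain y hyc => by
        refine ⟨sSup c, ?_, fun z hz => le_sSup hz⟩
        have hdir : DirectedOn (· ≤ ·) c := hchain.directedOn
        have hne : c.Nonempty := ⟨y, hyc⟩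
        have hmem : ∀ x : G, x ∈ sSup c ↔ ∃ K ∈ c, x ∈ K := fun x =>
          Subgroup.mem_sSup_of_directedOn hne hdir
        refine ⟨⟨fun x hx g => ?_⟩, ?_, ?_⟩
        · obtain ⟨K, hKc, hxK⟩ := (hmem x).mp hx
          exact (hmem _).mpr ⟨K, hKc, (hcS hKc).1.conj_mem x hxK g⟩
        · exact le_trans (hcS hyc).2.1 (le_sSup hyc)
        · apply le_antisymm
          · intro x hx
            obtain ⟨K, hKc, hxK⟩ := (hmem x).mp hx.2
            have : x ∈ A ⊓ K := ⟨hx.1, hxK⟩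
            rw [(hcS hKc).2.2] at this
            exact this
          · exact le_inf hNA (le_trans (hcS hyc).2.1 (le_sSup hyc))) N hNS
    obtain ⟨hBnorm, hNB, hAB⟩ := hBS
    refine ⟨B, hBnorm, hNB, ?_, hAB⟩
    -- show A ⊔ B = ⊤
    by_contra hABtop
    haveI := hA
    haveI := hBnorm
    have hEnorm : (A ⊔ B).Normal := Subgroup.sup_normal A B
    have : ¬ IsEssential (A ⊔ B) := fun hE => h ⟨A ⊔ B, hE, hABtop⟩
    rw [IsEssential] at this
    push_neg at this
    obtain ⟨M, hMnorm, hMbot, hEM⟩ := this hEnorm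
    haveI := hMnorm
    -- B' := B ⊔ M belongs to S and is strictly bigger than B
    have hB'S : B ⊔ M ∈ S := by
      refine ⟨Subgroup.sup_normal B M, le_trans hNB le_sup_left, ?_⟩
      apply le_antisymm
      · rintro x ⟨hxA, hxBM⟩
        have : x ∈ (B : Set G) * (M : Set G) := by
          rw [← Subgroup.mul_normal B M]; exact hxBM
        obtain ⟨b, hb, m, hm, rfl⟩ := this
        have hmE : b⁻¹ * (b * m) ∈ A ⊔ B := by
          exact mul_mem ((le_sup_right : B ≤ A ⊔ B) (inv_mem hb))
            ((le_sup_left : A ≤ A ⊔ B) hxA)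
        have hm1 : m ∈ (A ⊔ B) ⊓ M := by
          constructor
          · simpa using hmE
          · exact hm
        rw [hEM] at hm1
        have hm1' : m = 1 := hm1
        subst hm1'
        have hxA' : b ∈ A := by simpa using hxA
        have hbn : b ∈ A ⊓ B := ⟨hxA', hb⟩
        rw [hAB] at hbn
        simpa using hbn
      · exact le_inf hNA (le_trans hNB le_sup_left)
    have hle : B ≤ B ⊔ M := le_sup_left
    have heq : B ⊔ M ≤ B := hmax hB'S hle
    have hMB : M ≤ B := le_trans le_sup_right heq
    apply hMbot
    rw [eq_bot_iff]
    intro x hx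
    have : x ∈ (A ⊔ B) ⊓ M := ⟨(le_sup_right : B ≤ A ⊔ B) (hMB hx), hx⟩
    rw [hEM] at this
    exact this
  · intro h ⟨E, ⟨hEnorm, hEss⟩, hEtop⟩
    obtain ⟨B, hBnorm, -, hsup, hinf⟩ := h ⊥ inferInstance
      (by simp [bot_ne_top]) E hEnorm bot_le
    have hBbot : B ≠ ⊥ := by
      rintro rfl
      rw [sup_bot_eq] at hsup
      exact hEtop hsup
    exact hEss B hBnorm hBbot hinf
end

section
/- Let N and H be groups and φ : H → Aut(N) a homomorphism, and let G = N ⋊_φ H be the corresponding semidirect product. If H has a proper essential subgroup E, then G has a proper essential subgroup; in fact N ⋊_φ E is a proper essential subgroup of G. -/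
/-- If `E` is a proper essential subgroup of `H`, then `N ⋊ E` (the subgroup of the
semidirect product `N ⋊[φ] H` of elements whose `H`-component lies in `E`) is a proper
essential subgroup of `N ⋊[φ] H`; in particular `N ⋊[φ] H` has a proper essential
subgroup. -/
theorem stmt13 {N H : Type*} [Group N] [Group H] (φ : H →* MulAut N)
    (E : Subgroup H) (hE : IsEssential E) (hEproper : E ≠ ⊤) :
    IsEssential (E.comap (SemidirectProduct.rightHom : N ⋊[φ] H →* H)) ∧
      E.comap (SemidirectProduct.rightHom : N ⋊[φ] H →* H) ≠ ⊤ := by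
  obtain ⟨hEnorm, hEess⟩ := hE
  set f : N ⋊[φ] H →* H := SemidirectProduct.rightHom
  have hfsurj : Function.Surjective f := SemidirectProduct.rightHom_surjective
  refine ⟨⟨hEnorm.comap f, ?_⟩, ?_⟩
  · intro K hK hKbot
    by_cases hker : K ⊓ f.ker = ⊥
    · have hmapnorm : (K.map f).Normal := hK.map f hfsurj
      have hmapbot : K.map f ≠ ⊥ := by
        intro h
        apply hKbot
        rw [Subgroup.eq_bot_iff_forall] at h ⊢
        intro x hx
        have hx1 : f x = 1 := h _ ⟨x, hx, rfl⟩
        have hmem : x ∈ K ⊓ f.ker := ⟨hx, hx1⟩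
        rw [hker] at hmem
        exact hmem
      have hmeet := hEess _ hmapnorm hmapbot
      intro hbot
      apply hmeet
      rw [Subgroup.eq_bot_iff_forall] at hbot ⊢
      rintro h ⟨hhE, k, hkK, rfl⟩
      have : k ∈ E.comap f ⊓ K := ⟨hhE, hkK⟩
      rw [hbot k this]
      exact map_one f
    · intro hbot
      apply hker
      rw [Subgroup.eq_bot_iff_forall] at hbot ⊢
      rintro x ⟨hxK, hxker⟩
      refine hbot x ⟨?_, hxK⟩
      show f x ∈ E
      rw [hxker]
      exact E.one_mem
  · intro htop
    apply hEproper
    rw [Subgroup.eq_top_iff']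
    intro h
    have : (SemidirectProduct.inr h : N ⋊[φ] H) ∈ E.comap f := htop ▸ Subgroup.mem_top _
    simpa [f] using this
end

section
/- Let N and H be abelian groups and φ : H → Aut(N) a homomorphism such that the action of H on N is nontrivial (i.e., there exist h ∈ H and n ∈ N with φ(h)(n) ≠ n). Then the semidirect product G = N ⋊_φ H contains a proper essential subgroup. -/
/-- If `N` and `H` are abelian groups and the action `φ` of `H` on `N` is nontrivial,
then the semidirect product `N ⋊[φ] H` contains a proper essential subgroup. -/
theorem stmt14 {N H : Type*} [CommGroup N] [CommGroup H] (φ : H →* MulAut N)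
    (hnt : ∃ (h : H) (n : N), φ h n ≠ n) :
    ∃ E : Subgroup (N ⋊[φ] H), IsEssential E ∧ E ≠ ⊤ := by
  obtain ⟨h₀, n₀, hn₀⟩ := hnt
  set ψ : (N ⋊[φ] H) →* MulAut N := φ.comp SemidirectProduct.rightHom with hψ
  refine ⟨ψ.ker, ⟨MonoidHom.normal_ker ψ, ?_⟩, ?_⟩
  · intro M hM hMbot hcon
    apply hMbot
    rw [Subgroup.eq_bot_iff_forall]
    intro x hx
    have hxE : x ∈ ψ.ker := by
      rw [MonoidHom.mem_ker]
      ext n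
      have hcomm : Commute x (SemidirectProduct.inl n) := by
        refine Subgroup.commute_of_normal_of_disjoint M ψ.ker hM
          (MonoidHom.normal_ker ψ) ?_ x _ hx ?_
        · rw [disjoint_comm, disjoint_iff]
          exact hcon
        · simp [MonoidHom.mem_ker, hψ]
      have hc := congrArg SemidirectProduct.left hcomm
      simp only [SemidirectProduct.mul_left, SemidirectProduct.left_inl,
        SemidirectProduct.right_inl, map_one] at hc
      show φ x.right n = n
      have h2 : x.left * ((φ x.right) n) = x.left * n := by
        rw [hc]; simp [mul_comm]
      exact mul_left_cancel h2
    have : x ∈ ψ.ker ⊓ M := ⟨hxE, hx⟩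
    rw [hcon] at this
    exact this
  · intro htop
    apply hn₀
    have : SemidirectProduct.inr h₀ ∈ ψ.ker := htop ▸ Subgroup.mem_top _
    rw [MonoidHom.mem_ker] at this
    simp only [hψ, MonoidHom.comp_apply, SemidirectProduct.rightHom_inr] at this
    rw [this]
    rfl
end

section
/- Let G be a nontrivial group. Then G does not have a proper essential extension (i.e., for every group Ḡ and every injective homomorphism φ : G → Ḡ such that φ(G) is an essential subgroup of Ḡ, one has φ(G) = Ḡ) if and only if G is a complete group. -/
universe u

/-- A group is *complete* if its center is trivial and every automorphism is inner. -/
def IsCompleteGroup (G : Type*) [Group G] : Prop :=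
  Subgroup.center G = ⊥ ∧ ∀ σ : MulAut G, ∃ g : G, σ = MulAut.conj g

/-! ### The Heisenberg group over a commutative ring -/

/-- The Heisenberg group over a commutative ring `R`. -/
structure Heis (R : Type) : Type where
  x : R
  y : R
  z : R

namespace Heis

variable {R : Type} [CommRing R]

lemma ext' {a b : Heis R} (hx : a.x = b.x) (hy : a.y = b.y) (hz : a.z = b.z) : a = b := by
  cases a; cases b; simp_all

private def hmul (a b : Heis R) : Heis R := ⟨a.x + b.x, a.y + b.y, a.z + b.z + a.x * b.y⟩
private def hinv (a : Heis R) : Heis R := ⟨-a.x, -a.y, a.x * a.y - a.z⟩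

instance : Group (Heis R) where
  mul := hmul
  one := ⟨0, 0, 0⟩
  inv := hinv
  mul_assoc a b c := ext'
    (show a.x + b.x + c.x = a.x + (b.x + c.x) by ring)
    (show a.y + b.y + c.y = a.y + (b.y + c.y) by ring)
    (show a.z + b.z + a.x * b.y + c.z + (a.x + b.x) * c.y
        = a.z + (b.z + c.z + b.x * c.y) + a.x * (b.y + c.y) by ring)
  one_mul a := ext'
    (show (0 : R) + a.x = a.x by ring)
    (show (0 : R) + a.y = a.y by ring)
    (show (0 : R) + a.z + 0 * a.y = a.z by ring)
  mul_one a := ext'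
    (show a.x + (0 : R) = a.x by ring)
    (show a.y + (0 : R) = a.y by ring)
    (show a.z + 0 + a.x * 0 = a.z by ring)
  inv_mul_cancel a := ext'
    (show -a.x + a.x = (0 : R) by ring)
    (show -a.y + a.y = (0 : R) by ring)
    (show a.x * a.y - a.z + a.z + -a.x * a.y = (0 : R) by ring)

@[simp] lemma mul_def (a b : Heis R) :
    a * b = (⟨a.x + b.x, a.y + b.y, a.z + b.z + a.x * b.y⟩ : Heis R) := rfl

@[simp] lemma one_def : (1 : Heis R) = (⟨0, 0, 0⟩ : Heis R) := rfl

@[simp] lemma inv_def (a : Heis R) :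
    a⁻¹ = (⟨-a.x, -a.y, a.x * a.y - a.z⟩ : Heis R) := rfl

lemma commutator_eq (a b : Heis R) :
    a * b * a⁻¹ * b⁻¹ = (⟨0, 0, a.x * b.y - b.x * a.y⟩ : Heis R) := by
  refine ext' ?_ ?_ ?_ <;> · simp only [mul_def, inv_def]; ring

lemma central (r : R) (a : Heis R) :
    (⟨0, 0, r⟩ : Heis R) * a = a * (⟨0, 0, r⟩ : Heis R) := by
  refine ext' ?_ ?_ ?_ <;> · simp only [mul_def]; ring

end Heis

/-! ### The main construction: a group with nontrivial center has a proper
essential extension, built from a Heisenberg group. -/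

lemma heis_construction {G : Type u} [Group G] (R : Type) [CommRing R] [Nontrivial R]
    (ψ : R → G) (hadd : ∀ a b : R, ψ (a + b) = ψ a * ψ b)
    (hcen : ∀ r : R, ψ r ∈ Subgroup.center G)
    (hinj : Function.Injective ψ)
    (hyp : ∀ (Gbar : Type u) [Group Gbar], ∀ φ : G →* Gbar,
        Function.Injective φ → IsEssential φ.range → φ.range = ⊤) : False := by
  have hψ0 : ψ 0 = 1 := by
    have h := hadd 0 0
    rw [add_zero] at h
    exact left_eq_mul.mp h
  have hψneg : ∀ r : R, ψ (-r) = (ψ r)⁻¹ := by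
    intro r
    have h := hadd r (-r)
    rw [add_neg_cancel, hψ0] at h
    exact (inv_eq_of_mul_eq_one_right h.symm).symm
  have hcomm : ∀ (r : R) (g : G), g * ψ r = ψ r * g := fun r g =>
    Subgroup.mem_center_iff.mp (hcen r) g
  -- the amalgamating central subgroup
  let κ : R → G × Heis R := fun r => ((ψ r)⁻¹, (⟨0, 0, r⟩ : Heis R))
  let K : Subgroup (G × Heis R) :=
    { carrier := Set.range κ
      one_mem' := ⟨0, Prod.ext (show (ψ 0)⁻¹ = 1 by rw [hψ0, inv_one]) rfl⟩
      mul_mem' := by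
        rintro _ _ ⟨r, rfl⟩ ⟨s, rfl⟩
        refine ⟨r + s, Prod.ext ?_ ?_⟩
        · show (ψ (r + s))⁻¹ = (ψ r)⁻¹ * (ψ s)⁻¹
          have hc0 : Commute (ψ s) (ψ r) := hcomm r (ψ s)
          rw [hadd, mul_inv_rev, hc0.inv_inv.eq]
        · show (⟨0, 0, r + s⟩ : Heis R) = (⟨0, 0, r⟩ : Heis R) * (⟨0, 0, s⟩ : Heis R)
          refine Heis.ext' ?_ ?_ ?_ <;> · simp only [Heis.mul_def]; ring
      inv_mem' := by
        rintro _ ⟨r, rfl⟩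
        refine ⟨-r, Prod.ext ?_ ?_⟩
        · show (ψ (-r))⁻¹ = ((ψ r)⁻¹)⁻¹
          rw [hψneg]
        · show (⟨0, 0, -r⟩ : Heis R) = (⟨0, 0, r⟩ : Heis R)⁻¹
          refine Heis.ext' ?_ ?_ ?_ <;> · simp only [Heis.inv_def]; ring }
  haveI hKn : K.Normal := by
    constructor
    rintro _ ⟨r, rfl⟩ g
    refine ⟨r, Prod.ext ?_ ?_⟩
    · show (ψ r)⁻¹ = g.1 * (ψ r)⁻¹ * g.1⁻¹
      have hc0 : Commute g.1 (ψ r) := hcomm r g.1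
      rw [hc0.inv_right.eq, mul_inv_cancel_right]
    · show (⟨0, 0, r⟩ : Heis R) = g.2 * (⟨0, 0, r⟩ : Heis R) * g.2⁻¹
      rw [← Heis.central r g.2, mul_inv_cancel_right]
  let Q := (G × Heis R) ⧸ K
  let π : G × Heis R →* Q := QuotientGroup.mk' K
  let φ : G →* Q := π.comp (MonoidHom.inl G (Heis R))
  have hπeq : ∀ a b : G × Heis R, π a = π b ↔ ∃ r : R, a * κ r = b := by
    intro a b
    rw [QuotientGroup.mk'_eq_mk']
    constructor
    · rintro ⟨_, ⟨r, rfl⟩, h⟩; exact ⟨r, h⟩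
    · rintro ⟨r, h⟩; exact ⟨_, ⟨r, rfl⟩, h⟩
  have hφ_app : ∀ g : G, φ g = π (g, 1) := fun g => rfl
  have hφinj : Function.Injective φ := by
    intro a b hab
    rw [hφ_app, hφ_app, hπeq] at hab
    obtain ⟨r, h⟩ := hab
    have h2 : (1 : Heis R) * (⟨0,0,r⟩ : Heis R) = 1 := congrArg Prod.snd h
    simp only [Heis.one_def, Heis.mul_def, Heis.mk.injEq] at h2
    obtain ⟨-, -, hr⟩ := h2
    have hr0 : r = 0 := by simpa using hr
    have h1 : a * (ψ r)⁻¹ = b := congrArg Prod.fst h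
    rw [hr0, hψ0] at h1
    simpa using h1
  -- elements with trivial x,y coordinates are in the range
  have hzr : ∀ (g : G) (r : R), π (g, (⟨0,0,r⟩ : Heis R)) = π (g * ψ r, 1) := by
    intro g r
    rw [hπeq]
    refine ⟨-r, ?_⟩
    refine Prod.ext ?_ ?_
    · show g * (ψ (-r))⁻¹ = g * ψ r
      rw [hψneg, inv_inv]
    · show (⟨0,0,r⟩ : Heis R) * (⟨0,0,-r⟩ : Heis R) = 1
      simp
  have hrn : φ.range.Normal := by
    constructor
    rintro n ⟨g, rfl⟩ q
    induction q using QuotientGroup.induction_on with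
    | H p =>
      have h1 : (QuotientGroup.mk p : Q) = π p := rfl
      rw [hφ_app, h1, ← map_inv, ← map_mul, ← map_mul]
      have h2 : p * (g, 1) * p⁻¹ = (p.1 * g * p.1⁻¹, 1) := by
        refine Prod.ext ?_ ?_
        · rfl
        · show p.2 * 1 * p.2⁻¹ = 1
          group
      rw [h2]
      exact ⟨p.1 * g * p.1⁻¹, rfl⟩
  have hess : IsEssential φ.range := by
    refine ⟨hrn, ?_⟩
    intro N hN hNbot hinter
    rcases Subgroup.bot_or_exists_ne_one N with h | ⟨q, hqN, hq1⟩
    · exact hNbot h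
    obtain ⟨p, rfl⟩ := QuotientGroup.mk'_surjective K q
    have key : ∀ h' : Heis R, p.2.x * h'.y - h'.x * p.2.y = 0 := by
      intro h'
      set d : R := p.2.x * h'.y - h'.x * p.2.y with hd
      have hmN : π p * π (1, h') * (π p)⁻¹ * (π (1, h'))⁻¹ ∈ N := by
        have h1 : π (1, h') * (π p)⁻¹ * (π (1, h'))⁻¹ ∈ N :=
          hN.conj_mem _ (inv_mem hqN) _
        have h2 := mul_mem hqN h1
        have heq : π p * π (1, h') * (π p)⁻¹ * (π (1, h'))⁻¹
            = π p * (π (1, h') * (π p)⁻¹ * (π (1, h'))⁻¹) := by group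
        rw [heq]; exact h2
      have hmval : π p * π (1, h') * (π p)⁻¹ * (π (1, h'))⁻¹ = π (ψ d, 1) := by
        rw [← map_inv, ← map_inv, ← map_mul, ← map_mul, ← map_mul]
        have h2 : p * (1, h') * p⁻¹ * (1, h')⁻¹ = (1, (⟨0,0,d⟩ : Heis R)) := by
          refine Prod.ext ?_ ?_
          · show p.1 * 1 * p.1⁻¹ * 1⁻¹ = 1
            group
          · show p.2 * h' * p.2⁻¹ * h'⁻¹ = (⟨0,0,d⟩ : Heis R)
            rw [Heis.commutator_eq]
        rw [h2]
        have := hzr 1 d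
        rwa [one_mul] at this
      have hmR : π p * π (1, h') * (π p)⁻¹ * (π (1, h'))⁻¹ ∈ φ.range := by
        rw [hmval]; exact ⟨ψ d, rfl⟩
      have hbot : π p * π (1, h') * (π p)⁻¹ * (π (1, h'))⁻¹ ∈ φ.range ⊓ N :=
        Subgroup.mem_inf.mpr ⟨hmR, hmN⟩
      rw [hinter, Subgroup.mem_bot] at hbot
      rw [hmval] at hbot
      have : φ (ψ d) = φ 1 := by rw [map_one]; exact hbot
      have : ψ d = 1 := hφinj this
      rw [← hψ0] at this
      exact hinj this
    have hx0 : p.2.x = 0 := by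
      have := key ⟨0, 1, 0⟩
      simpa using this
    have hy0 : p.2.y = 0 := by
      have := key ⟨1, 0, 0⟩
      simpa using this
    have hp2 : p.2 = (⟨0, 0, p.2.z⟩ : Heis R) := Heis.ext' hx0 hy0 rfl
    have hpr : π p ∈ φ.range := by
      have h1 : π p = π (p.1, (⟨0,0,p.2.z⟩ : Heis R)) := by
        congr 1
        exact Prod.ext rfl hp2
      rw [h1, hzr]
      exact ⟨p.1 * ψ p.2.z, rfl⟩
    have : π p ∈ φ.range ⊓ N := Subgroup.mem_inf.mpr ⟨hpr, hqN⟩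
    rw [hinter, Subgroup.mem_bot] at this
    exact hq1 this
  have htop := hyp Q φ hφinj hess
  have hmem : π (1, (⟨1,0,0⟩ : Heis R)) ∈ φ.range := by
    rw [htop]; trivial
  obtain ⟨g, hg⟩ := hmem
  rw [hφ_app, hπeq] at hg
  obtain ⟨r, hr⟩ := hg
  have h2 : (1 : Heis R) * (⟨0,0,r⟩ : Heis R) = (⟨1,0,0⟩ : Heis R) := congrArg Prod.snd hr
  simp only [Heis.one_def, Heis.mul_def, Heis.mk.injEq] at h2
  obtain ⟨h01, -, -⟩ := h2
  have h02 : (0 : R) = 1 := by simpa using h01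
  exact zero_ne_one h02

/-- A nontrivial group `G` has no proper essential extension (every injective
homomorphism `φ : G → Ḡ` with essential image is surjective) iff `G` is complete. -/
theorem stmt15 {G : Type u} [Group G] [Nontrivial G] :
    (∀ (Gbar : Type u) [Group Gbar], ∀ φ : G →* Gbar,
        Function.Injective φ → IsEssential φ.range → φ.range = ⊤) ↔
      IsCompleteGroup G := by
  constructor
  · intro hyp
    -- Step 1: the center is trivial.
    have hcenter : Subgroup.center G = ⊥ := by
      by_contra hc
      rcases Subgroup.bot_or_exists_ne_one (Subgroup.center G) with h | ⟨z, hz, hz1⟩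
      · exact hc h
      by_cases hord : orderOf z = 0
      · -- infinite order: use the Heisenberg group over ℤ
        refine heis_construction ℤ (fun n : ℤ => z ^ n) (fun a b => zpow_add z a b)
          (fun n => Subgroup.zpow_mem _ hz n) ?_ hyp
        exact injective_zpow_iff_not_isOfFinOrder.mpr (orderOf_eq_zero_iff.mp hord)
      · -- finite order: pass to an element of prime order, use Heisenberg over `ZMod p`
        set n := orderOf z with hn
        have hn1 : n ≠ 1 := fun h => hz1 (orderOf_eq_one_iff.mp h)
        set p := n.minFac with hpdef
        have hp : p.Prime := Nat.minFac_prime hn1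
        haveI : Fact p.Prime := ⟨hp⟩
        set w := z ^ (n / p) with hw
        have hworder : orderOf w = p :=
          orderOf_pow_orderOf_div hord (Nat.minFac_dvd n)
        have hwp : w ^ p = 1 := by rw [← hworder]; exact pow_orderOf_eq_one w
        refine heis_construction (ZMod p) (fun c : ZMod p => w ^ c.val) ?_ ?_ ?_ hyp
        · intro a b
          show w ^ (a + b).val = w ^ a.val * w ^ b.val
          have h5 : (a.val + b.val) % p = (a.val + b.val) % orderOf w := by rw [hworder]
          rw [ZMod.val_add, h5, pow_mod_orderOf, pow_add]
        · intro c
          exact Subgroup.pow_mem _ (Subgroup.pow_mem _ hz _) _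
        · intro a b hab
          have h1 : a.val % orderOf w = b.val % orderOf w :=
            pow_inj_mod.mp hab
          rw [hworder, Nat.mod_eq_of_lt (ZMod.val_lt a), Nat.mod_eq_of_lt (ZMod.val_lt b)] at h1
          exact ZMod.val_injective p h1
    refine ⟨hcenter, ?_⟩
    -- Step 2: every automorphism is inner, using `Aut G` as essential extension.
    have hconj_inj : Function.Injective (MulAut.conj : G →* MulAut G) := by
      intro a b hab
      have h1 : ∀ h : G, a * h * a⁻¹ = b * h * b⁻¹ := fun h => by
        have := congrArg (fun σ : MulAut G => σ h) hab
        simpa [MulAut.conj_apply] using this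
      have hcen : b⁻¹ * a ∈ Subgroup.center G := by
        rw [Subgroup.mem_center_iff]
        intro g
        have h := h1 g
        have h2 : b⁻¹ * (a * g * a⁻¹) * a = b⁻¹ * (b * g * b⁻¹) * a := by rw [h]
        calc g * (b⁻¹ * a) = b⁻¹ * (b * g * b⁻¹) * a := by group
        _ = b⁻¹ * (a * g * a⁻¹) * a := h2.symm
        _ = b⁻¹ * a * g := by group
      rw [hcenter, Subgroup.mem_bot] at hcen
      calc a = b * (b⁻¹ * a) := by group
      _ = b := by rw [hcen]; group
    have hconj_sandwich : ∀ (σ : MulAut G) (g : G),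
        σ * MulAut.conj g * σ⁻¹ = MulAut.conj (σ g) := by
      intro σ g
      ext h
      show σ ((MulAut.conj g) (σ⁻¹ h)) = σ g * h * (σ g)⁻¹
      rw [MulAut.conj_apply, map_mul, map_mul, map_inv]
      rw [MulAut.apply_inv_self]
    have hrange_normal : (MulAut.conj : G →* MulAut G).range.Normal := by
      constructor
      rintro _ ⟨g, rfl⟩ σ
      exact ⟨σ g, (hconj_sandwich σ g).symm⟩
    have hess : IsEssential (MulAut.conj : G →* MulAut G).range := by
      refine ⟨hrange_normal, ?_⟩
      intro N hN hNbot hinter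
      rcases Subgroup.bot_or_exists_ne_one N with h | ⟨σ, hσN, hσ1⟩
      · exact hNbot h
      apply hσ1
      have key : ∀ g : G, σ g = g := by
        intro g
        set c : MulAut G := MulAut.conj g with hc
        have hmN : σ * c * σ⁻¹ * c⁻¹ ∈ N := by
          have h1 : c * σ⁻¹ * c⁻¹ ∈ N := hN.conj_mem _ (inv_mem hσN) _
          have h2 := mul_mem hσN h1
          have heq : σ * c * σ⁻¹ * c⁻¹ = σ * (c * σ⁻¹ * c⁻¹) := by group
          rw [heq]; exact h2
        have hmR : σ * c * σ⁻¹ * c⁻¹ ∈ (MulAut.conj : G →* MulAut G).range := by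
          have h2 : σ * c * σ⁻¹ * c⁻¹ = MulAut.conj (σ g) * (MulAut.conj g)⁻¹ := by
            rw [← hconj_sandwich σ g]
          rw [h2]
          exact mul_mem ⟨σ g, rfl⟩ (inv_mem ⟨g, rfl⟩)
        have hbot : σ * c * σ⁻¹ * c⁻¹ ∈ (MulAut.conj : G →* MulAut G).range ⊓ N :=
          Subgroup.mem_inf.mpr ⟨hmR, hmN⟩
        rw [hinter, Subgroup.mem_bot] at hbot
        have h3 : MulAut.conj (σ g) = MulAut.conj g := by
          have : σ * c * σ⁻¹ = c := by
            calc σ * c * σ⁻¹ = σ * c * σ⁻¹ * c⁻¹ * c := by group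
            _ = 1 * c := by rw [hbot]
            _ = c := one_mul c
          rw [← hconj_sandwich σ g, this]
        exact hconj_inj h3
      ext h
      simpa using key h
    have htop := hyp (MulAut G) MulAut.conj hconj_inj hess
    intro σ
    have : σ ∈ (MulAut.conj : G →* MulAut G).range := by rw [htop]; trivial
    obtain ⟨g, hg⟩ := this
    exact ⟨g, hg.symm⟩
  · rintro ⟨hcenter, hinner⟩ Gbar _ φ hinj ⟨hnormal, hess⟩
    -- the centralizer of the range is trivial
    set C := Subgroup.centralizer (φ.range : Set Gbar) with hC
    have hCnormal : C.Normal := by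
      constructor
      intro c hc g
      rw [hC, Subgroup.mem_centralizer_iff] at hc ⊢
      intro r hr
      have h1 : g⁻¹ * r * g ∈ (φ.range : Set Gbar) := by
        have := hnormal.conj_mem r hr g⁻¹
        simpa using this
      have h2 := hc _ h1
      calc r * (g * c * g⁻¹) = g * ((g⁻¹ * r * g) * c) * g⁻¹ := by group
      _ = g * (c * (g⁻¹ * r * g)) * g⁻¹ := by rw [h2]
      _ = (g * c * g⁻¹) * r := by group
    have hCbot : C = ⊥ := by
      by_contra hCne
      apply hess C hCnormal hCne
      refine (Subgroup.eq_bot_iff_forall _).mpr ?_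
      intro x hx
      obtain ⟨hxr, hxC⟩ := Subgroup.mem_inf.mp hx
      obtain ⟨h, rfl⟩ := hxr
      have hcen : h ∈ Subgroup.center G := by
        rw [Subgroup.mem_center_iff]
        intro g'
        have := Subgroup.mem_centralizer_iff.mp hxC (φ g') ⟨g', rfl⟩
        exact hinj (by simpa [map_mul] using this)
      rw [hcenter, Subgroup.mem_bot] at hcen
      rw [hcen, map_one]
    refine (Subgroup.eq_top_iff' _).mpr (fun x => ?_)
    -- conjugation by x induces an automorphism of G
    have hmem1 : ∀ g : G, ∃ g' : G, φ g' = x * φ g * x⁻¹ := fun g =>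
      MonoidHom.mem_range.mp (hnormal.conj_mem _ ⟨g, rfl⟩ x)
    have hmem2 : ∀ g : G, ∃ g' : G, φ g' = x⁻¹ * φ g * x := fun g =>
      MonoidHom.mem_range.mp (by simpa using hnormal.conj_mem _ ⟨g, rfl⟩ x⁻¹)
    choose f hf using hmem1
    choose f' hf' using hmem2
    have hff' : ∀ g : G, f (f' g) = g := by
      intro g
      apply hinj
      rw [hf, hf']
      group
    have hf'f : ∀ g : G, f' (f g) = g := by
      intro g
      apply hinj
      rw [hf', hf]
      group
    have hfmul : ∀ a b : G, f (a * b) = f a * f b := by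
      intro a b
      apply hinj
      rw [hf, map_mul, map_mul, hf, hf]
      group
    let σ : MulAut G :=
      { toFun := f
        invFun := f'
        left_inv := hf'f
        right_inv := hff'
        map_mul' := hfmul }
    obtain ⟨g, hσ⟩ := hinner σ
    have hfg : ∀ h : G, f h = g * h * g⁻¹ := by
      intro h
      have : σ h = MulAut.conj g h := by rw [hσ]
      exact (by simpa [MulAut.conj_apply] using this : σ h = g * h * g⁻¹)
    have hy : x * (φ g)⁻¹ ∈ C := by
      rw [hC, Subgroup.mem_centralizer_iff]
      rintro r ⟨h, rfl⟩
      have h1 : φ (f (g⁻¹ * h * g)) = x * φ (g⁻¹ * h * g) * x⁻¹ := hf _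
      have h2 : f (g⁻¹ * h * g) = h := by rw [hfg]; group
      rw [h2] at h1
      -- h1 : φ h = x * φ (g⁻¹ * h * g) * x⁻¹
      rw [map_mul, map_mul, map_inv] at h1
      calc φ h * (x * (φ g)⁻¹) = (x * ((φ g)⁻¹ * φ h * φ g) * x⁻¹) * (x * (φ g)⁻¹) := by
            rw [← h1]
      _ = (x * (φ g)⁻¹) * φ h := by group
    rw [hCbot, Subgroup.mem_bot] at hy
    exact ⟨g, (mul_inv_eq_one.mp hy).symm⟩
end

section
/- Let G be a nontrivial group with the property that for every group Ḡ and every injective homomorphism φ : G → Ḡ with φ(G) normal in Ḡ, the image φ(G) is a direct summand of Ḡ (i.e., there is a normal subgroup T of Ḡ with φ(G) ∩ T = {1} and φ(G)T = Ḡ). Then G is a complete group. -/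
universe u

section Stmt16Aux
variable {G : Type u} [Group G]

lemma commute_aux {Gb : Type u} [Group Gb] {A B : Subgroup Gb}
    (hA : A.Normal) (hB : B.Normal) (h : A ⊓ B = ⊥)
    {a b : Gb} (ha : a ∈ A) (hb : b ∈ B) : a * b = b * a :=
  Subgroup.commute_of_normal_of_disjoint A B hA hB (disjoint_iff.mpr h) a b ha hb

lemma decomp_aux {Gb : Type u} [Group Gb] {A B : Subgroup Gb} (hB : B.Normal)
    (hsup : A ⊔ B = ⊤) (x : Gb) : ∃ a ∈ A, ∃ b ∈ B, x = a * b := by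
  haveI := hB
  have hx : x ∈ (↑(A ⊔ B) : Set Gb) := by rw [hsup]; trivial
  rw [Subgroup.mul_normal] at hx
  obtain ⟨a, ha, b, hb, hab⟩ := hx
  exact ⟨a, ha, b, hb, hab.symm⟩


lemma conj_aux {Gb : Type u} [Group Gb] (φ : G →* Gb)
    {T : Subgroup Gb} (hTn : T.Normal) (hRn : φ.range.Normal)
    (hdis : φ.range ⊓ T = ⊥) (hsup : φ.range ⊔ T = ⊤) (b : Gb) :
    ∃ g₀ : G, ∀ g : G, b * φ g * b⁻¹ = φ (g₀ * g * g₀⁻¹) := by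
  obtain ⟨x, hx, t, ht, rfl⟩ := decomp_aux hTn hsup b
  obtain ⟨g₀, rfl⟩ := hx
  refine ⟨g₀, fun g => ?_⟩
  have hc : φ g * t = t * φ g := commute_aux hRn hTn hdis ⟨g, rfl⟩ ht
  have h5 : φ g₀ * t * φ g * (φ g₀ * t)⁻¹ = φ g₀ * (t * φ g * t⁻¹) * (φ g₀)⁻¹ := by group
  rw [h5, ← hc, map_mul, map_mul, map_inv]
  simp [mul_assoc]

lemma inner_aux
    (hsum : ∀ (Gbar : Type u) [Group Gbar], ∀ φ : G →* Gbar,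
      Function.Injective φ → (φ.range).Normal →
        ∃ T : Subgroup Gbar, T.Normal ∧ φ.range ⊓ T = ⊥ ∧ φ.range ⊔ T = ⊤) :
    ∀ σ : MulAut G, ∃ g : G, σ = MulAut.conj g := by
  intro σ
  set Gb := G ⋊[MonoidHom.id (MulAut G)] MulAut G with hGb
  have hinj : Function.Injective (SemidirectProduct.inl : G →* Gb) :=
    SemidirectProduct.inl_injective
  have hnorm : (SemidirectProduct.inl : G →* Gb).range.Normal := by
    rw [SemidirectProduct.range_inl_eq_ker_rightHom]
    exact MonoidHom.normal_ker _
  obtain ⟨T, hTn, hdis, hsup⟩ := hsum Gb SemidirectProduct.inl hinj hnorm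
  obtain ⟨g₀, hg₀⟩ := conj_aux SemidirectProduct.inl hTn hnorm hdis hsup
    (SemidirectProduct.inr σ)
  refine ⟨g₀, ?_⟩
  ext g
  have h1 : (SemidirectProduct.inl (σ g) : Gb) =
      SemidirectProduct.inr σ * SemidirectProduct.inl g * (SemidirectProduct.inr σ)⁻¹ := by
    have := SemidirectProduct.inl_aut (φ := MonoidHom.id (MulAut G)) σ g
    simpa using this
  have h2 := hg₀ g
  rw [← h1] at h2
  have := hinj h2
  simp [this, MulAut.conj]

/-- The antidiagonal central subgroup of `G × G`. -/
def Nc (G : Type u) [Group G] : Subgroup (G × G) where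
  carrier := {p | p.1 ∈ Subgroup.center G ∧ p.2 = p.1⁻¹}
  one_mem' := ⟨Subgroup.one_mem _, by simp⟩
  mul_mem' := by
    rintro ⟨a, a'⟩ ⟨b, b'⟩ ⟨ha, h1⟩ ⟨hb, h2⟩
    dsimp only at ha hb h1 h2 ⊢
    subst h1; subst h2
    refine ⟨Subgroup.mul_mem _ ha hb, ?_⟩
    have : a⁻¹ * b⁻¹ = b⁻¹ * a⁻¹ :=
      (Subgroup.mem_center_iff.mp (Subgroup.inv_mem _ ha) b⁻¹).symm
    simp [this, mul_inv_rev]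
  inv_mem' := by
    rintro ⟨a, a'⟩ ⟨ha, h1⟩
    dsimp only at ha h1
    subst h1
    exact ⟨Subgroup.inv_mem _ ha, by simp⟩

lemma mem_Nc {p : G × G} : p ∈ Nc G ↔ p.1 ∈ Subgroup.center G ∧ p.2 = p.1⁻¹ := Iff.rfl

instance : (Nc G).Normal := by
  constructor
  rintro ⟨a, a'⟩ ⟨ha, h1⟩ ⟨x, y⟩
  dsimp only at ha h1
  subst h1
  have hx : x * a * x⁻¹ = a := by
    rw [Subgroup.mem_center_iff.mp ha x]; group
  have hy : y * a⁻¹ * y⁻¹ = a⁻¹ := by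
    rw [Subgroup.mem_center_iff.mp (Subgroup.inv_mem _ ha) y]; group
  refine ⟨?_, ?_⟩
  · show x * a * x⁻¹ ∈ Subgroup.center G
    rwa [hx]
  · show y * a⁻¹ * y⁻¹ = (x * a * x⁻¹)⁻¹
    rw [hx, hy]

lemma retraction_aux
    (hsum : ∀ (Gbar : Type u) [Group Gbar], ∀ φ : G →* Gbar,
      Function.Injective φ → (φ.range).Normal →
        ∃ T : Subgroup Gbar, T.Normal ∧ φ.range ⊓ T = ⊥ ∧ φ.range ⊔ T = ⊤) :
    ∃ f : G →* G, (∀ z ∈ Subgroup.center G, f z = 1) ∧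
      ∀ g : G, (f g)⁻¹ * g ∈ Subgroup.center G := by
  classical
  set N := Nc G with hN
  set π : G × G →* (G × G) ⧸ N := QuotientGroup.mk' N with hπ
  set φ : G →* (G × G) ⧸ N := π.comp (MonoidHom.inl G G) with hφ
  set ψ : G →* (G × G) ⧸ N := π.comp (MonoidHom.inr G G) with hψ
  have hπeq : ∀ p q : G × G, π p = π q ↔ ∃ c ∈ Subgroup.center G,
      q = (p.1 * c, p.2 * c⁻¹) := by
    intro p q
    rw [QuotientGroup.mk'_eq_mk']
    constructor
    · rintro ⟨⟨c, c'⟩, ⟨hc, h1⟩, h2⟩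
      dsimp only at hc h1
      subst h1
      exact ⟨c, hc, h2.symm⟩
    · rintro ⟨c, hc, rfl⟩
      exact ⟨(c, c⁻¹), ⟨hc, rfl⟩, rfl⟩
  have hφinj : Function.Injective φ := by
    rw [injective_iff_map_eq_one]
    intro g hg
    have : ((g, 1) : G × G) ∈ N := (QuotientGroup.eq_one_iff _).mp hg
    obtain ⟨-, h2⟩ := mem_Nc.mp this
    simp only at h2
    rw [eq_comm, inv_eq_one] at h2
    exact h2
  have hψinj : Function.Injective ψ := by
    rw [injective_iff_map_eq_one]
    intro g hg
    have : ((1, g) : G × G) ∈ N := (QuotientGroup.eq_one_iff _).mp hg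
    obtain ⟨-, h2⟩ := mem_Nc.mp this
    simpa using h2
  have hψφ : ∀ c ∈ Subgroup.center G, ψ c = φ c := by
    intro c hc
    show π (1, c) = π (c, 1)
    rw [hπeq]
    exact ⟨c, hc, by simp⟩
  have hφnorm : φ.range.Normal := by
    constructor
    rintro n ⟨g, rfl⟩ q
    induction q using QuotientGroup.induction_on with
    | H p =>
      refine ⟨p.1 * g * p.1⁻¹, ?_⟩
      show π _ = π p * π (g, 1) * (π p)⁻¹
      rw [← map_inv, ← map_mul, ← map_mul]
      congr 1
      ext <;> simp
  obtain ⟨T, hTn, hdis, hsup⟩ := hsum _ φ hφinj hφnorm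
  -- every element of T commutes with the range of φ, hence lies in ψ.range
  have hTpsi : ∀ t ∈ T, ∃ u : G, ψ u = t := by
    intro t ht
    obtain ⟨p, rfl⟩ := QuotientGroup.mk'_surjective N t
    have hp1 : p.1 ∈ Subgroup.center G := by
      rw [Subgroup.mem_center_iff]
      intro g
      have hc : φ g * π p = π p * φ g :=
        commute_aux hφnorm hTn hdis ⟨g, rfl⟩ ht
      have : π ((g, 1) * p) = π (p * (g, 1)) := by
        rw [map_mul, map_mul]; exact hc
      rw [hπeq] at this
      obtain ⟨c, hcz, hc2⟩ := this
      rw [Prod.ext_iff] at hc2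
      obtain ⟨h1, h2⟩ := hc2
      simp only [Prod.fst_mul, Prod.snd_mul] at h1 h2
      have hc1 : c = 1 := by
        have h2' : p.2 = p.2 * c⁻¹ := by simpa using h2
        have : c⁻¹ = 1 := (left_eq_mul.mp h2')
        simpa using this
      rw [hc1, mul_one] at h1
      simpa using h1.symm
    refine ⟨p.2 * p.1, ?_⟩
    show π (1, p.2 * p.1) = π p
    rw [hπeq]
    refine ⟨p.1, hp1, ?_⟩
    ext <;> simp [mul_assoc]
  -- the defining predicate for the retraction-complement function
  set P : G → G → Prop := fun g u => ψ u ∈ T ∧ u⁻¹ * g ∈ Subgroup.center G with hP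
  have hex : ∀ g : G, ∃ u, P g u := by
    intro g
    obtain ⟨x, ⟨h, rfl⟩, t, ht, hgt⟩ := decomp_aux hTn hsup (ψ g)
    obtain ⟨u, rfl⟩ := hTpsi t ht
    have h' : φ h * ψ u = π (h, u) := by
      show π (h, 1) * π (1, u) = π (h, u)
      rw [← map_mul]
      congr 1
      ext <;> simp
    have : π (1, g) = π (h, u) := by
      rw [← h', ← hgt]; rfl
    rw [hπeq] at this
    obtain ⟨c, hcz, hc2⟩ := this
    rw [Prod.ext_iff] at hc2
    obtain ⟨h1, h2⟩ := hc2
    have h2' : u = g * c⁻¹ := by simpa using h2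
    refine ⟨u, ht, ?_⟩
    rw [h2']
    have hcg : (g * c⁻¹)⁻¹ * g = c := by group
    rw [hcg]; exact hcz
  have huniq : ∀ g u u', P g u → P g u' → u = u' := by
    rintro g u u' ⟨ht, hz⟩ ⟨ht', hz'⟩
    have hzz : u⁻¹ * u' ∈ Subgroup.center G := by
      have : u⁻¹ * u' = (u⁻¹ * g) * (u'⁻¹ * g)⁻¹ := by group
      rw [this]
      exact Subgroup.mul_mem _ hz (Subgroup.inv_mem _ hz')
    have hmem : ψ (u⁻¹ * u') ∈ φ.range ⊓ T := by
      constructor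
      · rw [hψφ _ hzz]; exact ⟨u⁻¹ * u', rfl⟩
      · rw [map_mul, map_inv]
        exact Subgroup.mul_mem _ (Subgroup.inv_mem _ ht) ht'
    rw [hdis] at hmem
    have := hψinj (a₁ := u⁻¹ * u') (a₂ := 1) (by simpa using hmem)
    rw [inv_mul_eq_one] at this
    exact this
  set f0 : G → G := fun g => Classical.choose (hex g) with hf0
  have hf0spec : ∀ g, P g (f0 g) := fun g => Classical.choose_spec (hex g)
  have hP1 : P 1 1 := ⟨by simpa using Subgroup.one_mem T, by simpa using Subgroup.one_mem _⟩
  have hPmul : ∀ a b, P (a * b) (f0 a * f0 b) := by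
    intro a b
    obtain ⟨hta, hza⟩ := hf0spec a
    obtain ⟨htb, hzb⟩ := hf0spec b
    refine ⟨by rw [map_mul]; exact Subgroup.mul_mem _ hta htb, ?_⟩
    have key : (f0 a * f0 b)⁻¹ * (a * b) = (f0 b)⁻¹ * (((f0 a)⁻¹ * a) * b) := by
      group
    rw [key]
    have hcom := Subgroup.mem_center_iff.mp hza (f0 b)⁻¹
    have h3 : (f0 b)⁻¹ * (((f0 a)⁻¹ * a) * b) = ((f0 a)⁻¹ * a) * ((f0 b)⁻¹ * b) := by
      rw [← mul_assoc, hcom]; group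
    rw [h3]
    exact Subgroup.mul_mem _ hza hzb
  refine ⟨MonoidHom.mk' f0 (fun a b => huniq (a * b) (f0 (a * b)) (f0 a * f0 b)
      (hf0spec _) (hPmul a b)), ?_, ?_⟩
  · intro z hz
    exact huniq z (f0 z) 1 (hf0spec z)
      ⟨by simpa using Subgroup.one_mem T, by simpa using hz⟩
  · intro g
    exact (hf0spec g).2
lemma central_sq
    (hsum : ∀ (Gbar : Type u) [Group Gbar], ∀ φ : G →* Gbar,
      Function.Injective φ → (φ.range).Normal →
        ∃ T : Subgroup Gbar, T.Normal ∧ φ.range ⊓ T = ⊥ ∧ φ.range ⊔ T = ⊤)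
    (hinner : ∀ σ : MulAut G, ∃ g : G, σ = MulAut.conj g) :
    ∀ z ∈ Subgroup.center G, z * z = 1 := by
  obtain ⟨f, hf1, hf2⟩ := retraction_aux hsum
  set s : G → G := fun g => (f g)⁻¹ * g with hs
  have hsc : ∀ g, s g ∈ Subgroup.center G := hf2
  have hsci : ∀ g, (s g)⁻¹ ∈ Subgroup.center G := fun g => Subgroup.inv_mem _ (hsc g)
  set e : G → G := fun g => (s g)⁻¹ * ((s g)⁻¹ * g) with he
  have hsmul : ∀ a b : G, s (a * b) = s a * s b := by
    intro a b
    show (f (a * b))⁻¹ * (a * b) = ((f a)⁻¹ * a) * ((f b)⁻¹ * b)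
    have h1 : (f (a * b))⁻¹ * (a * b) = (f b)⁻¹ * (((f a)⁻¹ * a) * b) := by
      rw [map_mul]; group
    rw [h1, ← mul_assoc, Subgroup.mem_center_iff.mp (hf2 a) (f b)⁻¹, mul_assoc]
  have hcc : ∀ x y a b : G, x ∈ Subgroup.center G → y ∈ Subgroup.center G →
      (x * y)⁻¹ * ((x * y)⁻¹ * (a * b)) = x⁻¹ * (x⁻¹ * a) * (y⁻¹ * (y⁻¹ * b)) := by
    intro x y a b hx hy
    have hxi : ∀ g : G, g * x⁻¹ = x⁻¹ * g :=
      fun g => Subgroup.mem_center_iff.mp (Subgroup.inv_mem _ hx) g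
    have hyi : ∀ g : G, g * y⁻¹ = y⁻¹ * g :=
      fun g => Subgroup.mem_center_iff.mp (Subgroup.inv_mem _ hy) g
    have hL : (x * y)⁻¹ * ((x * y)⁻¹ * (a * b)) =
        x⁻¹ * x⁻¹ * (y⁻¹ * (y⁻¹ * (a * b))) := by
      have s1 : (x * y)⁻¹ * ((x * y)⁻¹ * (a * b)) =
          (y⁻¹ * x⁻¹) * ((y⁻¹ * x⁻¹) * (a * b)) := by group
      rw [s1, hxi y⁻¹]
      have s2 : (x⁻¹ * y⁻¹) * ((x⁻¹ * y⁻¹) * (a * b)) =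
          x⁻¹ * ((y⁻¹ * x⁻¹) * (y⁻¹ * (a * b))) := by group
      rw [s2, hxi y⁻¹]
      group
    have hR : x⁻¹ * (x⁻¹ * a) * (y⁻¹ * (y⁻¹ * b)) =
        x⁻¹ * x⁻¹ * (y⁻¹ * (y⁻¹ * (a * b))) := by
      have s1 : x⁻¹ * (x⁻¹ * a) * (y⁻¹ * (y⁻¹ * b)) =
          x⁻¹ * x⁻¹ * ((a * y⁻¹) * (y⁻¹ * b)) := by group
      rw [s1, hyi a]
      have s2 : x⁻¹ * x⁻¹ * ((y⁻¹ * a) * (y⁻¹ * b)) =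
          x⁻¹ * x⁻¹ * (y⁻¹ * ((a * y⁻¹) * b)) := by group
      rw [s2, hyi a]
      group
    rw [hL, hR]
  have hmul : ∀ a b : G, e (a * b) = e a * e b := by
    intro a b
    show (s (a * b))⁻¹ * ((s (a * b))⁻¹ * (a * b)) =
      (s a)⁻¹ * ((s a)⁻¹ * a) * ((s b)⁻¹ * ((s b)⁻¹ * b))
    rw [hsmul]
    exact hcc _ _ _ _ (hsc a) (hsc b)
  have hf1s : ∀ g, f (s g) = 1 := fun g => hf1 _ (hsc g)
  have hfe : ∀ g, f (e g) = f g := by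
    intro g
    show f ((s g)⁻¹ * ((s g)⁻¹ * g)) = f g
    simp [map_mul, map_inv, hf1s g]
  have hse : ∀ g, s (e g) = (s g)⁻¹ := by
    intro g
    show (f (e g))⁻¹ * e g = (s g)⁻¹
    rw [hfe g]
    show (f g)⁻¹ * ((s g)⁻¹ * ((s g)⁻¹ * g)) = (s g)⁻¹
    have h := Subgroup.mem_center_iff.mp (hsci g) (f g)⁻¹
    calc (f g)⁻¹ * ((s g)⁻¹ * ((s g)⁻¹ * g))
        = ((f g)⁻¹ * (s g)⁻¹) * ((s g)⁻¹ * g) := by group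
      _ = ((s g)⁻¹ * (f g)⁻¹) * ((s g)⁻¹ * g) := by rw [h]
      _ = (s g)⁻¹ * (((f g)⁻¹ * (s g)⁻¹) * g) := by group
      _ = (s g)⁻¹ * (((s g)⁻¹ * (f g)⁻¹) * g) := by rw [h]
      _ = (s g)⁻¹ * ((s g)⁻¹ * ((f g)⁻¹ * g)) := by group
      _ = (s g)⁻¹ * ((s g)⁻¹ * s g) := rfl
      _ = (s g)⁻¹ := by group
  have hinv : ∀ g, e (e g) = g := by
    intro g
    show (s (e g))⁻¹ * ((s (e g))⁻¹ * e g) = g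
    rw [hse g, inv_inv]
    show s g * (s g * ((s g)⁻¹ * ((s g)⁻¹ * g))) = g
    group
  set σ : MulAut G :=
    { toFun := e, invFun := e, left_inv := hinv, right_inv := hinv,
      map_mul' := hmul } with hσ
  obtain ⟨g₀, hg₀⟩ := hinner σ
  intro z hz
  have hsz : s z = z := by
    show (f z)⁻¹ * z = z
    rw [hf1 z hz]; simp
  have h1 : σ z = z⁻¹ := by
    show (s z)⁻¹ * ((s z)⁻¹ * z) = z⁻¹
    rw [hsz]; group
  have h2 : σ z = z := by
    rw [hg₀]
    show g₀ * z * g₀⁻¹ = z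
    rw [Subgroup.mem_center_iff.mp hz g₀]; group
  rw [h1] at h2
  have h3 : z * z = z⁻¹ * z := by rw [h2]
  rw [h3]; group
lemma center_bot
    (hsum : ∀ (Gbar : Type u) [Group Gbar], ∀ φ : G →* Gbar,
      Function.Injective φ → (φ.range).Normal →
        ∃ T : Subgroup Gbar, T.Normal ∧ φ.range ⊓ T = ⊥ ∧ φ.range ⊔ T = ⊤) :
    Subgroup.center G = ⊥ := by
  classical
  have hinner := inner_aux hsum
  have hsq := central_sq hsum hinner
  by_contra hne
  obtain ⟨z, hz, hz1⟩ : ∃ z ∈ Subgroup.center G, z ≠ 1 := by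
    by_contra h
    push_neg at h
    exact hne (Subgroup.eq_bot_iff_forall _ |>.mpr h)
  have hzz : z * z = 1 := hsq z hz
  have hz2 : z ^ (2 : ℤ) = 1 := by
    have : z ^ (2 : ℤ) = z * z := zpow_two z
    rw [this, hzz]
  set K := Multiplicative ℤ with hK
  set m : G × K := (z, Multiplicative.ofAdd (2 : ℤ)) with hm
  set M := Subgroup.zpowers m with hM
  have hcm : ∀ p : G × K, Commute p m := by
    intro p
    show p * m = m * p
    have h1 : (p * m).1 = (m * p).1 := Subgroup.mem_center_iff.mp hz p.1
    have h2 : (p * m).2 = (m * p).2 := mul_comm p.2 m.2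
    exact Prod.ext h1 h2
  have hmk : ∀ k : ℤ, m ^ k = ((z ^ k, Multiplicative.ofAdd (2 * k)) : G × K) := by
    intro k
    have h1 : (m ^ k).1 = z ^ k := rfl
    have h2 : (m ^ k).2 = Multiplicative.ofAdd (2 * k) := by
      show Multiplicative.ofAdd (2 : ℤ) ^ k = _
      rw [← ofAdd_zsmul]
      congr 1
      simp [mul_comm]
    exact Prod.ext h1 h2
  have hMn : M.Normal := by
    constructor
    intro n hn p
    obtain ⟨k, rfl⟩ := Subgroup.mem_zpowers_iff.mp hn
    have h1 : p * m ^ k * p⁻¹ = m ^ k := by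
      rw [((hcm p).zpow_right k).eq]
      exact mul_inv_cancel_right _ _
    rw [h1]
    exact Subgroup.zpow_mem _ (Subgroup.mem_zpowers m) k
  haveI := hMn
  set π : G × K →* (G × K) ⧸ M := QuotientGroup.mk' M with hπ
  set φ : G →* (G × K) ⧸ M := π.comp (MonoidHom.inl G K) with hφ
  have hπeq : ∀ p q : G × K, π p = π q ↔ ∃ k : ℤ, q = p * m ^ k := by
    intro p q
    rw [QuotientGroup.mk'_eq_mk']
    constructor
    · rintro ⟨w, hw, rfl⟩
      obtain ⟨k, rfl⟩ := Subgroup.mem_zpowers_iff.mp hw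
      exact ⟨k, rfl⟩
    · rintro ⟨k, rfl⟩
      exact ⟨m ^ k, Subgroup.zpow_mem _ (Subgroup.mem_zpowers m) k, rfl⟩
  have hφval : ∀ g : G, φ g = π (g, 1) := fun g => rfl
  have hφinj : Function.Injective φ := by
    rw [injective_iff_map_eq_one]
    intro g hg
    have h0 : π (g, 1) = π (1, 1) := by
      rw [hφval] at hg
      rw [hg]; exact (map_one π).symm
    rw [hπeq] at h0
    obtain ⟨k, hk⟩ := h0
    rw [hmk] at hk
    rw [Prod.ext_iff] at hk
    obtain ⟨h1, h2⟩ := hk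
    have hk0 : k = 0 := by
      have : (1 : K) = Multiplicative.ofAdd (2 * k) := by simpa using h2
      have h3 : (2 : ℤ) * k = 0 := by
        have := congrArg Multiplicative.toAdd this
        simpa using this.symm
      omega
    have : (1 : G) = g * z ^ k := by simpa using h1
    rw [hk0] at this
    simpa using this.symm
  have hφnorm : φ.range.Normal := by
    constructor
    rintro n ⟨g, rfl⟩ q
    induction q using QuotientGroup.induction_on with
    | H p =>
      refine ⟨p.1 * g * p.1⁻¹, ?_⟩
      rw [hφval, hφval]
      show π _ = π p * π (g, 1) * (π p)⁻¹
      rw [← map_inv, ← map_mul, ← map_mul]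
      congr 1
      ext <;> simp
  obtain ⟨T, hTn, hdis, hsup⟩ := hsum _ φ hφinj hφnorm
  obtain ⟨x, ⟨h, rfl⟩, t, ht, hb⟩ :=
    decomp_aux hTn hsup (π (1, Multiplicative.ofAdd (1 : ℤ)))
  obtain ⟨p, rfl⟩ := QuotientGroup.mk'_surjective M t
  -- the first coordinate of p is central
  have hp1 : p.1 ∈ Subgroup.center G := by
    rw [Subgroup.mem_center_iff]
    intro g
    have hc : φ g * π p = π p * φ g :=
      commute_aux hφnorm hTn hdis ⟨g, rfl⟩ ht
    have h0 : π ((g, 1) * p) = π (p * (g, 1)) := by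
      rw [map_mul, map_mul]
      rw [hφval] at hc
      exact hc
    rw [hπeq] at h0
    obtain ⟨k, hk⟩ := h0
    rw [hmk] at hk
    rw [Prod.ext_iff] at hk
    obtain ⟨h1, h2⟩ := hk
    have hk0 : k = 0 := by
      have h3 : p.2 * 1 = (1 : K) * p.2 * Multiplicative.ofAdd (2 * k) := by
        simpa using h2
      have h3' : p.2 = p.2 * Multiplicative.ofAdd (2 * k) := by
        rw [mul_one] at h3
        rw [one_mul] at h3
        exact h3
      have h4' : Multiplicative.ofAdd (2 * k) = 1 := left_eq_mul.mp h3'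
      have h4 : (2 : ℤ) * k = 0 := by
        have := congrArg Multiplicative.toAdd h4'
        simpa using this
      omega
    rw [hk0] at h1
    have : p.1 * g = g * p.1 * 1 := by simpa using h1
    rw [mul_one] at this
    exact this.symm
  have hp11 : p.1 * p.1 = 1 := hsq p.1 hp1
  -- decompose the adjoined square root
  have h0 : π (1, Multiplicative.ofAdd (1 : ℤ)) = π ((h, 1) * p) := by
    rw [hb, map_mul, hφval]
  rw [hπeq] at h0
  obtain ⟨k, hk⟩ := h0
  rw [hmk] at hk
  rw [Prod.ext_iff] at hk
  obtain ⟨h1, h2⟩ := hk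
  have hp2 : p.2 = Multiplicative.ofAdd (1 + 2 * k) := by
    have h3 : (1 : K) * p.2 = Multiplicative.ofAdd (1 : ℤ) * Multiplicative.ofAdd (2 * k) := by
      simpa using h2
    rw [one_mul, ← ofAdd_add] at h3
    exact h3
  -- t * t lies in both T and the range of φ
  have htt : π p * π p = φ (z ^ (1 + 2 * k)) := by
    rw [← map_mul, hφval]
    have hpp : p * p = ((1 : G), Multiplicative.ofAdd (2 * (1 + 2 * k))) := by
      refine Prod.ext ?_ ?_
      · simpa using hp11
      · show p.2 * p.2 = _
        rw [hp2, ← ofAdd_add]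
        congr 1
        ring
    rw [hpp, hπeq]
    refine ⟨-(1 + 2 * k), ?_⟩
    rw [hmk]
    have hzinv : z⁻¹ = z := inv_eq_of_mul_eq_one_left hzz
    have hzodd : z ^ (1 + 2 * k) = z := by
      rw [zpow_add z 1 (2 * k), zpow_one, zpow_mul, hz2, one_zpow, mul_one]
    refine Prod.ext ?_ ?_
    · show z ^ (1 + 2 * k) = 1 * z ^ (-(1 + 2 * k))
      rw [one_mul, zpow_neg, hzodd, hzinv]
    · show (1 : K) = Multiplicative.ofAdd (2 * (1 + 2 * k)) * Multiplicative.ofAdd (2 * -(1 + 2 * k))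
      rw [← ofAdd_add]
      have harith : 2 * (1 + 2 * k) + 2 * -(1 + 2 * k) = 0 := by ring
      rw [harith]
      rfl
  have hzodd : z ^ (1 + 2 * k) = z := by
    rw [zpow_add z 1 (2 * k), zpow_one, zpow_mul, hz2, one_zpow, mul_one]
  have hmem : π p * π p ∈ φ.range ⊓ T :=
    ⟨by rw [htt]; exact ⟨_, rfl⟩, Subgroup.mul_mem _ ht ht⟩
  rw [hdis] at hmem
  have h5 : φ (z ^ (1 + 2 * k)) = 1 := by
    rw [← htt]; exact Subgroup.mem_bot.mp hmem
  have h6 : z ^ (1 + 2 * k) = 1 := by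
    apply hφinj
    rw [h5, map_one]
  rw [hzodd] at h6
  exact hz1 h6
end Stmt16Aux

/-- If `G` is a nontrivial group such that for every injective homomorphism
`φ : G → Ḡ` with normal image, `φ(G)` is a direct summand of `Ḡ`, then `G` is
complete. -/
theorem stmt16 {G : Type u} [Group G] [Nontrivial G]
    (hsum : ∀ (Gbar : Type u) [Group Gbar], ∀ φ : G →* Gbar,
      Function.Injective φ → (φ.range).Normal →
        ∃ T : Subgroup Gbar, T.Normal ∧ φ.range ⊓ T = ⊥ ∧ φ.range ⊔ T = ⊤) :
    IsCompleteGroup G := by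
  exact ⟨center_bot hsum, inner_aux hsum⟩
end

section
/- Every nontrivial abelian group G has a proper essential extension: there exist a group Ḡ and an injective homomorphism φ : G → Ḡ such that φ(G) is an essential subgroup of Ḡ and φ(G) ≠ Ḡ. -/
universe u

section Aux

variable (G : Type u) [CommGroup G]

lemma invAut_sq : (MulEquiv.inv G : MulAut G) * (MulEquiv.inv G) = 1 := by
  ext x
  simp [MulAut.mul_apply]

/-- The action of `ZMod 2` on a commutative group by inversion. -/
def dihPhi : Multiplicative (ZMod 2) →* MulAut G where
  toFun c := if c.toAdd = 0 then 1 else (MulEquiv.inv G : MulAut G)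
  map_one' := by simp
  map_mul' c d := by
    have h : ∀ x : ZMod 2, x = 0 ∨ x = 1 := by decide
    have h00 : (0 + 0 : ZMod 2) = 0 := by decide
    have h01 : (0 + 1 : ZMod 2) ≠ 0 := by decide
    have h10 : (1 + 0 : ZMod 2) ≠ 0 := by decide
    have h11 : (1 + 1 : ZMod 2) = 0 := by decide
    have hone : (1 : ZMod 2) ≠ 0 := by decide
    rcases h c.toAdd with hc | hc <;> rcases h d.toAdd with hd | hd <;>
      simp [toAdd_mul, hc, hd, h00, h01, h10, h11, hone, invAut_sq]

lemma dihPhi_apply_of_ne (c : Multiplicative (ZMod 2)) (hc : c.toAdd ≠ 0) (x : G) :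
    dihPhi G c x = x⁻¹ := by
  show (if c.toAdd = 0 then (1 : MulAut G) else (MulEquiv.inv G : MulAut G)) x = x⁻¹
  rw [if_neg hc]
  simp

variable {G}

/-- Case B key computation: commutator of `inl x` with an element whose right
component is nontrivial equals `inl (x * x)`. -/
lemma dih_comm (x : G) (y : G ⋊[dihPhi G] Multiplicative (ZMod 2)) (hy : y.right.toAdd ≠ 0) :
    SemidirectProduct.inl x * y * (SemidirectProduct.inl x)⁻¹ * y⁻¹
      = SemidirectProduct.inl (x * x) := by
  have hinv : (y.right⁻¹).toAdd ≠ 0 := by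
    have h : ∀ a : ZMod 2, a ≠ 0 → -a ≠ 0 := by decide
    simpa using h _ hy
  ext
  · simp only [SemidirectProduct.mul_left, SemidirectProduct.mul_right,
      SemidirectProduct.inv_left, SemidirectProduct.inv_right,
      SemidirectProduct.left_inl, SemidirectProduct.right_inl,
      map_one, MulAut.one_apply, one_mul, mul_one, inv_one,
      dihPhi_apply_of_ne _ _ hy, dihPhi_apply_of_ne _ _ hinv, inv_inv]
    simp [mul_comm, mul_left_comm, mul_assoc]
  · simp

end Aux

lemma prod_zpow {α β : Type*} [Group α] [Group β] (a : α) (b : β) (n : ℤ) :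
    ((a, b) : α × β) ^ n = (a ^ n, b ^ n) := rfl

section CaseB

variable {G : Type u} [CommGroup G]

lemma caseB (x : G) (hx : x * x ≠ 1) :
    Function.Injective (SemidirectProduct.inl : G →* G ⋊[dihPhi G] Multiplicative (ZMod 2)) ∧
    IsEssential (SemidirectProduct.inl : G →* G ⋊[dihPhi G] Multiplicative (ZMod 2)).range ∧
    (SemidirectProduct.inl : G →* G ⋊[dihPhi G] Multiplicative (ZMod 2)).range ≠ ⊤ := by
  refine ⟨SemidirectProduct.inl_injective, ⟨?_, ?_⟩, ?_⟩
  · rw [SemidirectProduct.range_inl_eq_ker_rightHom]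
    exact MonoidHom.normal_ker _
  · intro N hN hNne hEN
    obtain ⟨⟨y, hyN⟩, hy1⟩ := Subgroup.ne_bot_iff_exists_ne_one.1 hNne
    simp only [ne_eq, Subgroup.mk_eq_one] at hy1
    by_cases hyr : y.right.toAdd = 0
    · have hmem : y ∈ (SemidirectProduct.inl : G →* G ⋊[dihPhi G] Multiplicative (ZMod 2)).range := by
        refine ⟨y.left, ?_⟩
        have h1 : y.right = 1 := by
          rw [← toAdd_eq_zero] at *
          exact hyr
        ext <;> simp [h1]
      have : y ∈ ((SemidirectProduct.inl : G →* G ⋊[dihPhi G] Multiplicative (ZMod 2)).range ⊓ N : Subgroup _) := ⟨hmem, hyN⟩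
      rw [hEN] at this
      exact hy1 (Subgroup.mem_bot.1 this)
    · have hcomm := dih_comm x y hyr
      have hmemN : SemidirectProduct.inl x * y * (SemidirectProduct.inl x)⁻¹ * y⁻¹ ∈ N :=
        N.mul_mem (hN.conj_mem y hyN (SemidirectProduct.inl x)) (N.inv_mem hyN)
      rw [hcomm] at hmemN
      have : SemidirectProduct.inl (x * x) ∈
          ((SemidirectProduct.inl : G →* G ⋊[dihPhi G] Multiplicative (ZMod 2)).range ⊓ N : Subgroup _) :=
        ⟨⟨x * x, rfl⟩, hmemN⟩
      rw [hEN] at this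
      refine hx (SemidirectProduct.inl_injective (φ := dihPhi G) ?_)
      rw [map_one]
      exact Subgroup.mem_bot.1 this
  · intro h
    have : SemidirectProduct.inr (Multiplicative.ofAdd (1 : ZMod 2)) ∈
        (SemidirectProduct.inl : G →* G ⋊[dihPhi G] Multiplicative (ZMod 2)).range := h ▸ Subgroup.mem_top _
    obtain ⟨a, ha⟩ := this
    have := congrArg SemidirectProduct.right ha
    simp at this
    exact (by decide : ¬ ((1 : ZMod 2) = 0)) (by simpa [← toAdd_eq_zero] using this.symm)

end CaseB

section CaseA

variable (G : Type u) [CommGroup G]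

/-- The embedding of `G` into the quotient of `G × ℤ` identifying `(g, -2)` with `1`,
i.e. adjoining a square root of `g`. -/
def qphi (g : G) :
    G →* (G × Multiplicative ℤ) ⧸ Subgroup.zpowers ((g, Multiplicative.ofAdd (-2 : ℤ))) :=
  (QuotientGroup.mk' _).comp (MonoidHom.inl G (Multiplicative ℤ))

variable {G}

lemma caseA (hsq : ∀ x : G, x * x = 1) (g : G) (hg : g ≠ 1) :
    Function.Injective (qphi G g) ∧ IsEssential (qphi G g).range ∧ (qphi G g).range ≠ ⊤ := by
  set K : Subgroup (G × Multiplicative ℤ) :=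
    Subgroup.zpowers ((g, Multiplicative.ofAdd (-2 : ℤ))) with hK
  have memK : ∀ (a : G) (t : Multiplicative ℤ),
      ((a, t) ∈ K ↔ ∃ n : ℤ, g ^ n = a ∧ t.toAdd = -2 * n) := by
    intro a t
    rw [hK, Subgroup.mem_zpowers_iff]
    constructor
    · rintro ⟨n, hn⟩
      rw [prod_zpow, Prod.mk.injEq] at hn
      refine ⟨n, hn.1, ?_⟩
      rw [← hn.2, toAdd_zpow]
      simp [mul_comm]
    · rintro ⟨n, h1, h2⟩
      refine ⟨n, ?_⟩
      rw [prod_zpow, Prod.mk.injEq]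
      refine ⟨h1, ?_⟩
      rw [← ofAdd_toAdd t, h2]
      rw [← ofAdd_zsmul]
      simp [mul_comm]
  set φ : G →* (G × Multiplicative ℤ) ⧸ K := qphi G g with hφ
  have hφ_apply : ∀ a : G, φ a = QuotientGroup.mk (a, (1 : Multiplicative ℤ)) := fun a => rfl
  have hg2 : ∀ n : ℤ, g ^ (2 * n) = 1 := by
    intro n
    rw [zpow_mul]
    have : g ^ (2 : ℤ) = 1 := by rw [zpow_two, hsq g]
    rw [this, one_zpow]
  have hkey : ∀ (b : G) (m : ℤ),
      (QuotientGroup.mk (b, Multiplicative.ofAdd (2 * m)) : (G × Multiplicative ℤ) ⧸ K)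
        ∈ φ.range := by
    intro b m
    refine ⟨b * g ^ m, ?_⟩
    rw [hφ_apply, QuotientGroup.eq]
    have hprod : ((b * g ^ m, (1 : Multiplicative ℤ))⁻¹
        * (b, Multiplicative.ofAdd (2 * m)) : G × Multiplicative ℤ)
        = (g ^ (-m : ℤ), Multiplicative.ofAdd (2 * m)) := by
      ext
      · simp [zpow_neg, mul_inv, mul_comm, mul_left_comm, mul_assoc]
      · simp
    rw [hprod, memK]
    refine ⟨-m, rfl, by simp; ring⟩
  have hinj : Function.Injective φ := by
    rw [injective_iff_map_eq_one]
    intro a ha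
    rw [hφ_apply, QuotientGroup.eq_one_iff, memK] at ha
    obtain ⟨n, h1, h2⟩ := ha
    have hn : n = 0 := by simp at h2; omega
    rw [hn] at h1
    simpa using h1.symm
  refine ⟨hinj, ⟨Subgroup.normal_of_comm _, ?_⟩, ?_⟩
  · intro N hN hNne hEN
    obtain ⟨⟨y, hyN⟩, hy1⟩ := Subgroup.ne_bot_iff_exists_ne_one.1 hNne
    simp only [ne_eq, Subgroup.mk_eq_one] at hy1
    obtain ⟨⟨a, t⟩, rfl⟩ := QuotientGroup.mk_surjective y
    have hpow : ((a, t) : G × Multiplicative ℤ) ^ (2 : ℕ)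
        = ((1 : G), Multiplicative.ofAdd (2 * t.toAdd)) := by
      have ht : t * t = Multiplicative.ofAdd (2 * t.toAdd) := by
        rw [two_mul, ofAdd_add, ofAdd_toAdd]
      rw [pow_two, Prod.mk_mul_mk, hsq a, ht]
    have hmk2 : ((QuotientGroup.mk (a, t) : (G × Multiplicative ℤ) ⧸ K)) ^ (2 : ℕ)
        = QuotientGroup.mk (((1 : G), Multiplicative.ofAdd (2 * t.toAdd))) := by
      rw [← hpow]; rfl
    have h2r : ((QuotientGroup.mk (a, t) : (G × Multiplicative ℤ) ⧸ K)) ^ (2 : ℕ)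
        ∈ φ.range := by
      rw [hmk2]; exact hkey 1 t.toAdd
    have h2b : ((QuotientGroup.mk (a, t) : (G × Multiplicative ℤ) ⧸ K)) ^ (2 : ℕ)
        ∈ (φ.range ⊓ N : Subgroup _) := ⟨h2r, N.pow_mem hyN 2⟩
    rw [hEN] at h2b
    have h2one := Subgroup.mem_bot.1 h2b
    rw [hmk2, QuotientGroup.eq_one_iff, memK] at h2one
    obtain ⟨n, hn1, hn2⟩ := h2one
    have hn : n = -t.toAdd := by simp at hn2; omega
    rcases Int.even_or_odd t.toAdd with ⟨m, hm⟩ | ⟨m, hm⟩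
    · have ht : t = Multiplicative.ofAdd (2 * m) := by
        rw [← ofAdd_toAdd t, hm, two_mul]
      have hyr : (QuotientGroup.mk (a, t) : (G × Multiplicative ℤ) ⧸ K) ∈ φ.range := by
        rw [ht]; exact hkey a m
      have : (QuotientGroup.mk (a, t) : (G × Multiplicative ℤ) ⧸ K)
          ∈ (φ.range ⊓ N : Subgroup _) := ⟨hyr, hyN⟩
      rw [hEN] at this
      exact hy1 (Subgroup.mem_bot.1 this)
    · exfalso
      apply hg
      have hodd : g ^ (2 * m + 1 : ℤ) = g := by
        rw [zpow_add, hg2 m, one_mul, zpow_one]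
      rw [hn, hm] at hn1
      rw [zpow_neg, hodd, inv_eq_one] at hn1
      exact hn1
  · intro h
    have : (QuotientGroup.mk (1, Multiplicative.ofAdd (1 : ℤ)) : (G × Multiplicative ℤ) ⧸ K)
        ∈ φ.range := h ▸ Subgroup.mem_top _
    obtain ⟨a, ha⟩ := this
    rw [hφ_apply, QuotientGroup.eq, show ((a, (1 : Multiplicative ℤ))⁻¹
      * (1, Multiplicative.ofAdd (1 : ℤ)) : G × Multiplicative ℤ)
      = (a⁻¹, Multiplicative.ofAdd (1 : ℤ)) by ext <;> simp, memK] at ha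
    obtain ⟨n, -, h2⟩ := ha
    simp at h2
    omega

end CaseA

/-- Every nontrivial abelian group has a proper essential extension: there are a group
`Ḡ` and an injective homomorphism `φ : G → Ḡ` whose image is a proper essential
subgroup of `Ḡ`. -/
theorem stmt17 {G : Type u} [CommGroup G] [Nontrivial G] :
    ∃ (Gbar : GrpCat.{u}) (φ : G →* Gbar),
      Function.Injective φ ∧ IsEssential φ.range ∧ φ.range ≠ ⊤ := by
  by_cases hsq : ∃ x : G, x * x ≠ 1
  · obtain ⟨x, hx⟩ := hsq
    exact ⟨GrpCat.of (G ⋊[dihPhi G] Multiplicative (ZMod 2)),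
      (SemidirectProduct.inl : G →* G ⋊[dihPhi G] Multiplicative (ZMod 2)), caseB x hx⟩
  · push_neg at hsq
    obtain ⟨g, hg⟩ := exists_ne (1 : G)
    exact ⟨GrpCat.of ((G × Multiplicative ℤ) ⧸
        Subgroup.zpowers ((g, Multiplicative.ofAdd (-2 : ℤ)))),
      qphi G g, caseA hsq g hg⟩
end

section
/- Let I be a group which is an extensional object in the category of groups, i.e., for every injective group homomorphism f : N → G whose image f(N) is a normal subgroup of G, and every homomorphism φ : N → I, there exists a homomorphism h : G → I with h ∘ f = φ. Then I is the trivial group. -/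
universe u

/-- If `I` is an *extensional object* in the category of groups — for every injective
homomorphism `f : N → G` with normal image and every homomorphism `φ : N → I` there is
`h : G → I` with `h ∘ f = φ` — then `I` is the trivial group. -/
theorem stmt18 {I : Type u} [Group I]
    (hext : ∀ (N G : Type u) [Group N] [Group G], ∀ f : N →* G,
      Function.Injective f → (f.range).Normal →
        ∀ φ : N →* I, ∃ h : G →* I, h.comp f = φ) :
    ∀ x : I, x = 1 := by
  intro x
  -- The holomorph of `I × I`.
  set G := SemidirectProduct (I × I) (MulAut (I × I)) (MonoidHom.id _) with hG
  obtain ⟨h, hh⟩ := hext (I × I) G SemidirectProduct.inl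
    SemidirectProduct.inl_injective
    (by rw [SemidirectProduct.range_inl_eq_ker_rightHom]; infer_instance)
    (MonoidHom.fst I I)
  -- the swap automorphism of `I × I`
  set σ : MulAut (I × I) := MulEquiv.prodComm with hσ
  have key : (SemidirectProduct.inl ((MonoidHom.id (MulAut (I × I))) σ ((x, 1) : I × I)) : G)
      = SemidirectProduct.inr σ * SemidirectProduct.inl (x, 1)
        * SemidirectProduct.inr σ⁻¹ :=
    SemidirectProduct.inl_aut σ (x, 1)
  have hσx : ((MonoidHom.id (MulAut (I × I))) σ ((x, 1) : I × I)) = ((1, x) : I × I) := rfl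
  rw [hσx] at key
  have := congrArg h key
  simp only [map_mul] at this
  have h1 : h (SemidirectProduct.inl ((1, x) : I × I)) = 1 := by
    have := DFunLike.congr_fun hh ((1, x) : I × I)
    simpa using this
  have h2 : h (SemidirectProduct.inl ((x, 1) : I × I)) = x := by
    have := DFunLike.congr_fun hh ((x, 1) : I × I)
    simpa using this
  rw [h1, h2] at this
  have : h (SemidirectProduct.inr σ) * x * h (SemidirectProduct.inr σ⁻¹) = 1 := this.symm
  have hinv : h (SemidirectProduct.inr σ⁻¹) = (h (SemidirectProduct.inr σ))⁻¹ := by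
    rw [map_inv, map_inv]
  rw [hinv] at this
  have := congrArg (fun y => (h (SemidirectProduct.inr σ))⁻¹ * y * h (SemidirectProduct.inr σ)) this
  simpa [mul_assoc] using this
end

section
/- The only injective object in the category of groups is the trivial group: if a group J is an injective object in the category of groups (for every monomorphism K → L and every morphism K → J there exists a morphism L → J making the triangle commute), then J is trivial. -/
universe u

open Equiv

private def fZ : Multiplicative ℤ →* Equiv.Perm ℚ :=
  MonoidHom.mk' (fun n => Equiv.addRight ((Multiplicative.toAdd n : ℤ) : ℚ))
    (by
      intro a b
      ext x
      simp [Equiv.Perm.mul_apply]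
      ring)

private lemma fZ_inj : Function.Injective fZ := by
  intro a b hab
  have := congrArg (fun (e : Equiv.Perm ℚ) => e 0) hab
  simp [fZ] at this
  exact Multiplicative.toAdd.injective (by exact_mod_cast this)

private noncomputable def tP : Equiv.Perm ℚ := Equiv.mulLeft₀ (2 : ℚ) two_ne_zero

private lemma rel1 : tP * Equiv.addRight (1:ℚ) * tP⁻¹ =
    Equiv.addRight (1:ℚ) * Equiv.addRight (1:ℚ) := by
  ext x
  simp [tP, Equiv.Perm.mul_apply, Equiv.Perm.inv_def, Equiv.mulLeft₀]
  ring

private def nP : Equiv.Perm ℚ := Equiv.neg ℚ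

private lemma rel2 : nP * Equiv.addRight (1:ℚ) * nP = (Equiv.addRight (1:ℚ))⁻¹ := by
  ext x
  simp [nP, Equiv.Perm.mul_apply, Equiv.Perm.inv_def]
  ring

private lemma rel3 : nP * nP = 1 := by
  ext x
  simp [nP, Equiv.Perm.mul_apply]

/-- The only injective object in the category of groups is the trivial group: if for
every injective homomorphism `f : K → L` and every homomorphism `φ : K → J` there is
`h : L → J` with `h ∘ f = φ`, then `J` is trivial. -/
theorem stmt19 {J : Type u} [Group J]
    (hinj : ∀ (K L : Type u) [Group K] [Group L], ∀ f : K →* L,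
      Function.Injective f →
        ∀ φ : K →* J, ∃ h : L →* J, h.comp f = φ) :
    ∀ x : J, x = 1 := by
  classical
  -- Every x : J extends to a homomorphism from Perm ℚ sending (· + 1) to x.
  have ext : ∀ x : J, ∃ h : Equiv.Perm ℚ →* J, h (Equiv.addRight (1:ℚ)) = x := by
    intro x
    let eK : ULift.{u} (Multiplicative ℤ) ≃* Multiplicative ℤ := MulEquiv.ulift
    let eL : ULift.{u} (Equiv.Perm ℚ) ≃* Equiv.Perm ℚ := MulEquiv.ulift
    let f' : ULift.{u} (Multiplicative ℤ) →* ULift.{u} (Equiv.Perm ℚ) :=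
      (eL.symm.toMonoidHom.comp fZ).comp eK.toMonoidHom
    have hf' : Function.Injective f' :=
      eL.symm.injective.comp (fZ_inj.comp eK.injective)
    let φ : ULift.{u} (Multiplicative ℤ) →* J :=
      (zpowersHom J x).comp eK.toMonoidHom
    obtain ⟨h, hh⟩ := hinj _ _ f' hf' φ
    refine ⟨h.comp eL.symm.toMonoidHom, ?_⟩
    have := congrArg (fun g : ULift.{u} (Multiplicative ℤ) →* J =>
      g (eK.symm (Multiplicative.ofAdd 1))) hh
    simpa [f', φ, eK, eL, fZ, zpowersHom] using this
  -- two consequences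
  have conj2 : ∀ x : J, ∃ s : J, s * x * s⁻¹ = x * x := by
    intro x
    obtain ⟨h, hh⟩ := ext x
    refine ⟨h tP, ?_⟩
    rw [← hh, ← map_inv, ← map_mul, ← map_mul, rel1, map_mul]
  have conjinv : ∀ x : J, ∃ u : J, u * u = 1 ∧ u * x * u = x⁻¹ := by
    intro x
    obtain ⟨h, hh⟩ := ext x
    refine ⟨h nP, ?_, ?_⟩
    · rw [← map_mul, rel3, map_one]
    · rw [← hh, ← map_mul, ← map_mul, rel2, map_inv]
  intro x
  obtain ⟨u, hu1, hu2⟩ := conjinv x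
  obtain ⟨s, hs⟩ := conj2 u
  rw [hu1] at hs
  have hu : u = 1 := by
    have : s * u = s := by
      have := congrArg (· * s) hs
      simpa [mul_assoc] using this
    exact mul_left_cancel (a := s) (by simpa using this)
  rw [hu] at hu2
  simp at hu2
  -- hu2 : x = x⁻¹, so x * x = 1
  have hxx : x * x = 1 := by nth_rewrite 2 [hu2]; simp
  obtain ⟨s', hs'⟩ := conj2 x
  rw [hxx] at hs'
  have : s' * x = s' := by
    have := congrArg (· * s') hs'
    simpa [mul_assoc] using this
  simpa using mul_left_cancel (a := s') (by simpa using this)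
end
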